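/- arXiv:2108.07066 — 3 statements merged into one kernel-verified Lean document; each statement's English description precedes it below -/
import Mathlib

section
/- Let s ≥ 1 be an integer, let G be an H_s-free graph with clique number ω, and let 𝓛 = (L_0, L_1, …, L_k) be an optimal s-template in G. Let I ⊆ {1,…,k}, let u ∈ M_I, and let j ∈ {1,…,k} ∖ I. Then for each i ∈ I, there are fewer than ω^s vertices v adjacent to u such that v ∈ M_J for some J ⊆ {1,…,k} ∖ {i,j}. Hence there are fewer than ω^{s+1} vertices v adjacent to u such that v ∈ M_J for some J ⊆ {1,…,k} ∖ {j} with I ⊄ J. -/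
open SimpleGraph Set

/-- `G` contains no induced subgraph isomorphic to `H`. -/
def IsInducedFree {V : Type*} {W : Type*} (G : SimpleGraph V) (H : SimpleGraph W) : Prop :=
  ∀ s : Set V, ¬ Nonempty ((G.induce s) ≃g H)

/-- The double star `H_s`: two adjacent internal vertices `0` and `1`; `0` is adjacent to the
`s` leaves `2,…,s+1` and `1` is adjacent to the `s` leaves `s+2,…,2s+1`. -/
def doubleStarGraph (s : ℕ) : SimpleGraph (Fin (2*s+2)) :=
  SimpleGraph.fromRel (fun a b =>
    ((a : ℕ) = 0 ∧ (b : ℕ) = 1) ∨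
    ((a : ℕ) = 0 ∧ 2 ≤ (b : ℕ) ∧ (b : ℕ) ≤ s+1) ∨
    ((a : ℕ) = 1 ∧ s+2 ≤ (b : ℕ)))

/-- A graph has degeneracy at most `d` if every nonempty subgraph has a vertex whose degree
in that subgraph is at most `d`. -/
def DegeneracyAtMost {V : Type*} (G : SimpleGraph V) (d : ℕ) : Prop :=
  ∀ H : G.Subgraph, H.verts.Nonempty → ∃ v ∈ H.verts, (H.neighborSet v).ncard ≤ d

/-- A `(k,d)`-colouring: a partition of the vertex set into `k` parts, each inducing a
subgraph of degeneracy at most `d`. -/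
def KDColorable {V : Type*} (G : SimpleGraph V) (k d : ℕ) : Prop :=
  ∃ f : V → Fin k, ∀ i : Fin k, DegeneracyAtMost (G.induce {v | f v = i}) d

/-- `G` contains the complete bipartite graph `K_{t,t}` as a (not necessarily induced)
subgraph. -/
def ContainsKtt {V : Type*} (G : SimpleGraph V) (t : ℕ) : Prop :=
  ∃ A B : Finset V, A.card = t ∧ B.card = t ∧ Disjoint A B ∧
    ∀ a ∈ A, ∀ b ∈ B, G.Adj a b

/-- A set of vertices is stable (independent) if no two of its members are adjacent. -/
def IsStableSet {V : Type*} (G : SimpleGraph V) (S : Set V) : Prop :=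
  ∀ a ∈ S, ∀ b ∈ S, a ≠ b → ¬ G.Adj a b

/-- An `s`-template in `G`: a clique `L0` complete to all the `L i`, pairwise disjoint sets
`L 1, …, L k` (here indexed by `Fin k`) whose sizes lie between `ω^{s+5}` and `14 ω^{s+6}`,
such that each vertex of `L i` has at most `ω^{s+3}` non-neighbours in each other `L j`. -/
def IsTemplate {V : Type*} (G : SimpleGraph V) (s : ℕ) (L0 : Set V) {k : ℕ}
    (L : Fin k → Set V) : Prop :=
  (∀ i : Fin k, Disjoint L0 (L i)) ∧
  (Pairwise fun i j : Fin k => Disjoint (L i) (L j)) ∧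
  G.IsClique L0 ∧
  (∀ u ∈ L0, ∀ i : Fin k, ∀ v ∈ L i, G.Adj u v) ∧
  (∀ i : Fin k, G.cliqueNum ^ (s+5) ≤ (L i).ncard ∧ (L i).ncard ≤ 14 * G.cliqueNum ^ (s+6)) ∧
  (∀ i j : Fin k, i ≠ j → ∀ v ∈ L i,
    ({u ∈ L j | ¬ G.Adj v u}).ncard ≤ G.cliqueNum ^ (s+3))

/-- The value of an `s`-template. -/
noncomputable def templateValue {V : Type*} (G : SimpleGraph V) (s : ℕ) (L0 : Set V) {k : ℕ}
    (L : Fin k → Set V) : ℕ :=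
  (⋃ i, L i).ncard + 7 * G.cliqueNum ^ (s+5) * L0.ncard + k * G.cliqueNum ^ (s+5)

/-- An optimal `s`-template: one of maximum value among all `s`-templates in `G`. -/
def IsOptimalTemplate {V : Type*} (G : SimpleGraph V) (s : ℕ) (L0 : Set V) {k : ℕ}
    (L : Fin k → Set V) : Prop :=
  IsTemplate G s L0 L ∧
  ∀ (k' : ℕ) (L0' : Set V) (L' : Fin k' → Set V), IsTemplate G s L0' L' →
    templateValue G s L0' L' ≤ templateValue G s L0 L

/-- `V(𝓛)`, the vertex set of a template. -/
def templateVerts {V : Type*} (L0 : Set V) {k : ℕ} (L : Fin k → Set V) : Set V :=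
  L0 ∪ ⋃ i, L i

/-- `N(𝓛)`: the vertices outside `V(𝓛)` with a neighbour in `L 1 ∪ ⋯ ∪ L k`. -/
def templateNbhd {V : Type*} (G : SimpleGraph V) (L0 : Set V) {k : ℕ}
    (L : Fin k → Set V) : Set V :=
  {v | v ∉ templateVerts L0 L ∧ ∃ i : Fin k, ∃ u ∈ L i, G.Adj v u}


/-- A vertex `v` is pendant with respect to the template: there are distinct `i, j`, a vertex
`u ∈ L j` and a stable set `S ⊆ L i` of `s+1` common neighbours of `u` such that `v` is not
adjacent to `u` and `v` has exactly one neighbour in `S`. -/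
def TemplatePendant {V : Type*} (G : SimpleGraph V) (s : ℕ) {k : ℕ}
    (L : Fin k → Set V) (v : V) : Prop :=
  ∃ i j : Fin k, i ≠ j ∧ ∃ u ∈ L j, ∃ S : Set V, S ⊆ L i ∧ S.ncard = s + 1 ∧
    IsStableSet G S ∧ (∀ w ∈ S, G.Adj u w) ∧ ¬ G.Adj v u ∧ ({w ∈ S | G.Adj v w}).ncard = 1

/-- A vertex `v` is dense with respect to the template: there are `j` and `u ∈ L j` such that
for all `i ≠ j`, fewer than `ω^{s+2}/14` vertices of `L i` are adjacent to `u` and not to `v`. -/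
def TemplateDense {V : Type*} (G : SimpleGraph V) (s : ℕ) {k : ℕ}
    (L : Fin k → Set V) (v : V) : Prop :=
  ∃ j : Fin k, ∃ u ∈ L j, ∀ i : Fin k, i ≠ j →
    14 * ({w ∈ L i | G.Adj u w ∧ ¬ G.Adj v w}).ncard < G.cliqueNum ^ (s+2)

/-- A vertex `v` is pure with respect to the template: it has no neighbour in at least two of
the sets `L i`, and for each `i`, either it has no neighbour in `L i` or it has at most
`ω^{s+2}/7` non-neighbours in `L i`. -/
def TemplatePure {V : Type*} (G : SimpleGraph V) (s : ℕ) {k : ℕ}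
    (L : Fin k → Set V) (v : V) : Prop :=
  (∃ i₁ i₂ : Fin k, i₁ ≠ i₂ ∧ (∀ w ∈ L i₁, ¬ G.Adj v w) ∧ (∀ w ∈ L i₂, ¬ G.Adj v w)) ∧
  (∀ i : Fin k, (∀ w ∈ L i, ¬ G.Adj v w) ∨
    7 * ({w ∈ L i | ¬ G.Adj v w}).ncard ≤ G.cliqueNum ^ (s+2))

/-- `M_I`: the pure vertices `v` (with respect to the template) whose set `I_v` of indices `i`
such that `v` has a neighbour in `L i` equals `I`. -/
def templatePart {V : Type*} (G : SimpleGraph V) (s : ℕ) (L0 : Set V) {k : ℕ}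
    (L : Fin k → Set V) (I : Set (Fin k)) : Set V :=
  {v | v ∈ templateNbhd G L0 L ∧ TemplatePure G s L v ∧
    ∀ i : Fin k, (∃ u ∈ L i, G.Adj v u) ↔ i ∈ I}

/-- Two disjoint sets `A, B` are `s`-crowded if there is no stable set meeting each of them
in exactly `s` vertices. -/
def SCrowded {V : Type*} (G : SimpleGraph V) (s : ℕ) (A B : Set V) : Prop :=
  ¬ ∃ X : Set V, IsStableSet G X ∧ (X ∩ A).ncard = s ∧ (X ∩ B).ncard = s

/-- `c` satisfies the Kővári–Sós–Turán-type bound for `H_s`: every `H_s`-free graph either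
contains `K_{t,t}` as a subgraph or has degeneracy less than `t^c`. -/
def KSTBound (s c : ℕ) : Prop :=
  ∀ (W : Type) [Fintype W], ∀ G' : SimpleGraph W, IsInducedFree G' (doubleStarGraph s) →
    ∀ t : ℕ, ContainsKtt G' t ∨ ∃ D : ℕ, D < t ^ c ∧ DegeneracyAtMost G' D

/-- `Z(𝓛)`: the union of `L0` with the set of vertices of `N(𝓛)` having at most `ω^{s+2}/4`
non-neighbours in each `L i`. -/
def templateZ {V : Type*} (G : SimpleGraph V) (s : ℕ) (L0 : Set V) {k : ℕ}
    (L : Fin k → Set V) : Set V :=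
  L0 ∪ {v ∈ templateNbhd G L0 L |
    ∀ i : Fin k, 4 * ({u ∈ L i | ¬ G.Adj v u}).ncard ≤ G.cliqueNum ^ (s+2)}

/-- `Y(𝓛) = (V(𝓛) ∪ N(𝓛)) \ Z(𝓛)`. -/
def templateY {V : Type*} (G : SimpleGraph V) (s : ℕ) (L0 : Set V) {k : ℕ}
    (L : Fin k → Set V) : Set V :=
  (templateVerts L0 L ∪ templateNbhd G L0 L) \ templateZ G s L0 L

/-- `N_A(𝓛)`: the vertices of `A \ V(𝓛)` with a neighbour in `L 1 ∪ ⋯ ∪ L k`. -/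
def templateNbhdIn {V : Type*} (G : SimpleGraph V) (A : Set V) (L0 : Set V) {k : ℕ}
    (L : Fin k → Set V) : Set V :=
  {v ∈ A | v ∉ templateVerts L0 L ∧ ∃ i : Fin k, ∃ u ∈ L i, G.Adj v u}

/-- `Z_A(𝓛)`: the union of `L0` with the set of vertices of `A \ V(𝓛)` having at most
`ω^{s+2}/4` non-neighbours in each `L i`. -/
def templateZIn {V : Type*} (G : SimpleGraph V) (s : ℕ) (A : Set V) (L0 : Set V) {k : ℕ}
    (L : Fin k → Set V) : Set V :=
  L0 ∪ {v ∈ A | v ∉ templateVerts L0 L ∧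
    ∀ i : Fin k, 4 * ({u ∈ L i | ¬ G.Adj v u}).ncard ≤ G.cliqueNum ^ (s+2)}

/-- `Y_A(𝓛) = (V(𝓛) ∪ N_A(𝓛)) \ Z_A(𝓛)`. -/
def templateYIn {V : Type*} (G : SimpleGraph V) (s : ℕ) (A : Set V) (L0 : Set V) {k : ℕ}
    (L : Fin k → Set V) : Set V :=
  (templateVerts L0 L ∪ templateNbhdIn G A L0 L) \ templateZIn G s A L0 L

section Aux

lemma ramseyBound {V : Type*} [DecidableEq V] (G : SimpleGraph V) [DecidableRel G.Adj] :
    ∀ (n t s : ℕ) (A : Finset V), t + s = n →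
    (∀ B : Finset V, B ⊆ A → G.IsClique (B : Set V) → B.card ≤ t) →
    (∀ S : Finset V, S ⊆ A → IsStableSet G (S : Set V) → S.card ≤ s) →
    A.card + 1 ≤ (t + s).choose t := by

  intro n
  induction n with
  | zero =>
    intro t s A h hc hs
    have ht : t = 0 := by omega
    have hs' : s = 0 := by omega
    rcases A.eq_empty_or_nonempty with rfl | ⟨v, hv⟩
    · simp [ht, hs']
    · have := hc {v} (by simpa) (by simp [SimpleGraph.isClique_singleton])
      simp [ht] at this
  | succ n ih =>
    intro t s A h hc hs
    rcases A.eq_empty_or_nonempty with rfl | ⟨v, hv⟩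
    · have : 1 ≤ (t+s).choose t := Nat.one_le_iff_ne_zero.mpr (Nat.choose_pos (by omega : t ≤ t + s)).ne'
      simpa using this
    rcases Nat.eq_zero_or_pos t with rfl | ht
    · have := hc {v} (by simpa) (by simp [SimpleGraph.isClique_singleton])
      simp at this
    rcases Nat.eq_zero_or_pos s with rfl | hs0
    · have := hs {v} (by simpa) (by intro a ha b hb hab; simp at ha hb; subst ha; subst hb; simp at hab)
      simp at this
    set B := (A.erase v).filter (fun w => G.Adj v w) with hB
    set C := (A.erase v).filter (fun w => ¬ G.Adj v w) with hC
    have hcardA : A.card = 1 + B.card + C.card := by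
      have h1 := Finset.card_filter_add_card_filter_not (s := A.erase v) (p := fun w => G.Adj v w)
      rw [← hB, ← hC] at h1
      have h2 : (A.erase v).card + 1 = A.card := Finset.card_erase_add_one hv
      omega
    have hBsub : B ⊆ A := (Finset.filter_subset _ _).trans (Finset.erase_subset _ _)
    have hCsub : C ⊆ A := (Finset.filter_subset _ _).trans (Finset.erase_subset _ _)
    have hBadj : ∀ w ∈ B, G.Adj v w := by intro w hw; rw [hB, Finset.mem_filter] at hw; exact hw.2
    have hCnadj : ∀ w ∈ C, ¬ G.Adj v w ∧ w ≠ v := by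
      intro w hw; rw [hC, Finset.mem_filter, Finset.mem_erase] at hw; exact ⟨hw.2, hw.1.1⟩
    have ihB : B.card + 1 ≤ (t - 1 + s).choose (t - 1) := by
      refine ih (t-1) s B (by omega) ?_ ?_
      · intro B' hB' hcl
        have hclv : G.IsClique ((insert v B' : Finset V) : Set V) := by
          intro a ha b hb hab
          simp at ha hb
          rcases ha with rfl | ha <;> rcases hb with rfl | hb
          · exact absurd rfl hab
          · exact hBadj b (hB' hb)
          · exact (hBadj a (hB' ha)).symm
          · exact hcl ha hb hab
        have hsub : insert v B' ⊆ A := by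
          intro x hx; rcases Finset.mem_insert.mp hx with rfl | hx
          · exact hv
          · exact hBsub (hB' hx)
        have hle := hc _ hsub hclv
        have hvB' : v ∉ B' := fun hx => (G.loopless.irrefl v (hBadj v (hB' hx))).elim
        rw [Finset.card_insert_of_notMem hvB'] at hle
        omega
      · intro S hS hst; exact hs S (hS.trans hBsub) hst
    have ihC : C.card + 1 ≤ (t + (s - 1)).choose t := by
      refine ih t (s-1) C (by omega) ?_ ?_
      · intro B' hB' hcl; exact hc B' (hB'.trans hCsub) hcl
      · intro S hS hst
        have hvS : v ∉ S := fun hx => ((hCnadj v (hS hx)).2 rfl).elim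
        have hstv : IsStableSet G ((insert v S : Finset V) : Set V) := by
          intro a ha b hb hab
          simp at ha hb
          rcases ha with rfl | ha <;> rcases hb with rfl | hb
          · exact absurd rfl hab
          · exact (hCnadj b (hS hb)).1
          · intro hadj; exact (hCnadj a (hS ha)).1 hadj.symm
          · exact hst a ha b hb hab
        have hsub : insert v S ⊆ A := by
          intro x hx; rcases Finset.mem_insert.mp hx with rfl | hx
          · exact hv
          · exact hCsub (hS hx)
        have hle := hs _ hsub hstv
        rw [Finset.card_insert_of_notMem hvS] at hle
        omega
    have hpascal : (t + s).choose t = (t - 1 + s).choose (t - 1) + (t + (s-1)).choose t := by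
      obtain ⟨t', rfl⟩ : ∃ t', t = t' + 1 := ⟨t - 1, by omega⟩
      obtain ⟨s', rfl⟩ : ∃ s', s = s' + 1 := ⟨s - 1, by omega⟩
      simp only [Nat.add_sub_cancel]
      have e1 : t' + 1 + (s' + 1) = (t' + s' + 1) + 1 := by ring
      have e2 : t' + (s' + 1) = t' + s' + 1 := by ring
      have e3 : t' + 1 + s' = t' + s' + 1 := by ring
      rw [e1, e2, e3, Nat.choose_succ_succ]
    omega

lemma chooseBound (w : ℕ) (hw : 2 ≤ w) : ∀ s : ℕ, (w + s).choose s ≤ 2 * w ^ s := by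

  intro s
  induction s with
  | zero => simp
  | succ s ihs =>
    rcases Nat.eq_zero_or_pos s with rfl | hs
    · simp [Nat.choose_one_right]; omega
    have key : (w + s + 1) * ((w + s).choose s) = ((w + s + 1).choose (s+1)) * (s+1) := by
      have := Nat.add_one_mul_choose_eq (w + s) s
      simpa [Nat.succ_eq_add_one] using this
    have h1 : ((w + s + 1).choose (s+1)) * (s+1) ≤ (w * (s+1)) * (2 * w ^ s) := by
      rw [← key]
      have h2 : w + s + 1 ≤ w * (s + 1) := by nlinarith
      exact Nat.mul_le_mul h2 ihs
    have h3 : (w * (s+1)) * (2 * w ^ s) = (2 * w ^ (s+1)) * (s+1) := by ring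
    rw [h3] at h1
    have := Nat.le_of_mul_le_mul_right h1 (by omega : 0 < s + 1)
    rw [show w + (s+1) = w + s + 1 by ring]
    exact this

lemma stable_of_large {V : Type*} [Fintype V] (G : SimpleGraph V) (s : ℕ)
    (hw : 2 ≤ G.cliqueNum) (A : Set V) (hA : G.cliqueNum ^ s ≤ A.ncard) :
    ∃ S : Set V, S ⊆ A ∧ IsStableSet G S ∧ S.ncard = s := by

  classical
  rcases Nat.eq_zero_or_pos s with rfl | hs
  · exact ⟨∅, by simp, by intro a ha; simp at ha, by simp⟩
  by_contra hcon
  push_neg at hcon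
  set w := G.cliqueNum with hwdef
  have hstab : ∀ S : Finset V, S ⊆ A.toFinset → IsStableSet G (S : Set V) → S.card ≤ s - 1 := by
    intro S hS hst
    by_contra hlt
    push_neg at hlt
    have hsS : s ≤ S.card := by omega
    obtain ⟨T, hTS, hTcard⟩ := Finset.exists_subset_card_eq hsS
    have hTst : IsStableSet G (T : Set V) := by
      intro a ha b hb hab
      exact hst a (by exact_mod_cast hTS (by exact_mod_cast ha)) b (by exact_mod_cast hTS (by exact_mod_cast hb)) hab
    have hTA : (T : Set V) ⊆ A := by
      intro x hx
      have := hS (hTS (by exact_mod_cast hx))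
      simpa using this
    exact hcon (T : Set V) hTA hTst (by simp [Set.ncard_coe_finset, hTcard])
  have hclique : ∀ B : Finset V, B ⊆ A.toFinset → G.IsClique (B : Set V) → B.card ≤ w :=
    fun B _ hB => hB.card_le_cliqueNum
  have hmain := ramseyBound G (w + (s-1)) w (s-1) A.toFinset rfl hclique hstab
  have hsymm : (w + (s-1)).choose w = (w + (s-1)).choose (s-1) := by
    have := Nat.choose_symm (by omega : w ≤ w + (s-1))
    rw [show w + (s-1) - w = s - 1 by omega] at this
    exact this.symm
  have hcb : (w + (s-1)).choose (s-1) ≤ 2 * w ^ (s-1) := chooseBound w hw (s-1)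
  have h2w : 2 * w ^ (s-1) ≤ w ^ s := by
    calc 2 * w ^ (s-1) ≤ w * w ^ (s-1) := Nat.mul_le_mul_right _ hw
    _ = w ^ s := by rw [← pow_succ']; congr 1; omega
  have hcard : A.toFinset.card = A.ncard := (Set.ncard_eq_toFinset_card' A).symm
  omega

lemma doubleStar_adj (s : ℕ) (p q : Fin (2*s+2)) :
    (doubleStarGraph s).Adj p q ↔ (p:ℕ) ≠ (q:ℕ) ∧ (
      ((p:ℕ)=0 ∧ (q:ℕ)=1) ∨ ((q:ℕ)=0 ∧ (p:ℕ)=1) ∨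
      ((p:ℕ)=0 ∧ 2 ≤ (q:ℕ) ∧ (q:ℕ) ≤ s+1) ∨ ((q:ℕ)=0 ∧ 2 ≤ (p:ℕ) ∧ (p:ℕ) ≤ s+1) ∨
      ((p:ℕ)=1 ∧ s+2 ≤ (q:ℕ)) ∨ ((q:ℕ)=1 ∧ s+2 ≤ (p:ℕ)) ) := by

  rw [doubleStarGraph, SimpleGraph.fromRel_adj]
  constructor
  · rintro ⟨hne, h⟩
    refine ⟨fun he => hne (Fin.ext he), ?_⟩
    tauto
  · rintro ⟨hne, h⟩
    refine ⟨fun he => hne (by rw [he]), ?_⟩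
    tauto

lemma induced_doubleStar_exists {V : Type*} (G : SimpleGraph V) (s : ℕ) (f : Fin (2*s+2) → V)
    (hinj : Function.Injective f)
    (hadj : ∀ p q, G.Adj (f p) (f q) ↔ (doubleStarGraph s).Adj p q) :
    ¬ IsInducedFree G (doubleStarGraph s) := by

  intro h
  apply h (Set.range f)
  refine ⟨⟨(Equiv.ofInjective f hinj).symm, ?_⟩⟩
  intro a b
  have ha : f ((Equiv.ofInjective f hinj).symm a) = a := Equiv.apply_ofInjective_symm hinj a
  have hb : f ((Equiv.ofInjective f hinj).symm b) = b := Equiv.apply_ofInjective_symm hinj b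
  rw [← hadj]
  rw [ha, hb]
  simp [SimpleGraph.comap_adj]

lemma build_doubleStar {V : Type*} (G : SimpleGraph V) (s : ℕ) (u x : V) (S T : Finset V)
    (hux : G.Adj u x)
    (hScard : S.card = s) (hTcard : T.card = s)
    (hSst : IsStableSet G (S : Set V)) (hTst : IsStableSet G (T : Set V))
    (huS : ∀ a ∈ S, G.Adj u a)
    (hxT : ∀ b ∈ T, G.Adj x b)
    (hxS : ∀ a ∈ S, ¬ G.Adj x a)
    (huT : ∀ b ∈ T, ¬ G.Adj u b)
    (hST : ∀ a ∈ S, ∀ b ∈ T, ¬ G.Adj a b)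
    (hSTd : ∀ a ∈ S, a ∉ T)
    (hxnS : x ∉ S) (hunT : u ∉ T) :
    ¬ IsInducedFree G (doubleStarGraph s) := by

  classical
  have hunS : u ∉ S := fun h => G.loopless.irrefl u (huS u h)
  have hxnT : x ∉ T := fun h => G.loopless.irrefl x (hxT x h)
  set eS := S.equivFinOfCardEq hScard with heS
  set eT := T.equivFinOfCardEq hTcard with heT
  set aS : ℕ → V := fun m => if h : m < s then ((eS.symm ⟨m, h⟩ : S) : V) else u with haS
  set aT : ℕ → V := fun m => if h : m < s then ((eT.symm ⟨m, h⟩ : T) : V) else u with haT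
  have haSmem : ∀ m, m < s → aS m ∈ S := by
    intro m hm; rw [haS]; simp only [dif_pos hm]; exact (eS.symm ⟨m, hm⟩).2
  have haTmem : ∀ m, m < s → aT m ∈ T := by
    intro m hm; rw [haT]; simp only [dif_pos hm]; exact (eT.symm ⟨m, hm⟩).2
  have haSinj : ∀ m m', m < s → m' < s → aS m = aS m' → m = m' := by
    intro m m' hm hm' he
    rw [haS] at he; simp only [dif_pos hm, dif_pos hm'] at he
    have := eS.symm.injective (Subtype.ext he)
    simpa using congrArg Fin.val this
  have haTinj : ∀ m m', m < s → m' < s → aT m = aT m' → m = m' := by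
    intro m m' hm hm' he
    rw [haT] at he; simp only [dif_pos hm, dif_pos hm'] at he
    have := eT.symm.injective (Subtype.ext he)
    simpa using congrArg Fin.val this
  set f : Fin (2*s+2) → V := fun p =>
    if (p:ℕ) = 0 then u else if (p:ℕ) = 1 then x
    else if (p:ℕ) < s + 2 then aS ((p:ℕ) - 2) else aT ((p:ℕ) - (s+2)) with hf
  have hf0 : ∀ p : Fin (2*s+2), (p:ℕ) = 0 → f p = u := by
    intro p hp; rw [hf]; simp [hp]
  have hf1 : ∀ p : Fin (2*s+2), (p:ℕ) = 1 → f p = x := by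
    intro p hp; rw [hf]; simp [hp]
  have hfS : ∀ p : Fin (2*s+2), 2 ≤ (p:ℕ) → (p:ℕ) ≤ s+1 → f p = aS ((p:ℕ) - 2) := by
    intro p h1 h2; rw [hf]
    simp only [if_neg (by omega : ¬ (p:ℕ) = 0), if_neg (by omega : ¬ (p:ℕ) = 1),
      if_pos (by omega : (p:ℕ) < s + 2)]
  have hfT : ∀ p : Fin (2*s+2), s+2 ≤ (p:ℕ) → f p = aT ((p:ℕ) - (s+2)) := by
    intro p h1; rw [hf]
    simp only [if_neg (by omega : ¬ (p:ℕ) = 0), if_neg (by omega : ¬ (p:ℕ) = 1),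
      if_neg (by omega : ¬ (p:ℕ) < s + 2)]
  -- case classification
  have hcases : ∀ p : Fin (2*s+2), (p:ℕ) = 0 ∨ (p:ℕ) = 1 ∨ (2 ≤ (p:ℕ) ∧ (p:ℕ) ≤ s+1)
      ∨ (s+2 ≤ (p:ℕ) ∧ (p:ℕ) - (s+2) < s) := by
    intro p; have := p.isLt; omega
  have hinj : Function.Injective f := by
    intro p q hpq
    have hps := p.isLt; have hqs := q.isLt
    apply Fin.ext
    rcases hcases p with hp | hp | ⟨hp, hp'⟩ | ⟨hp, hp'⟩ <;>
      rcases hcases q with hq | hq | ⟨hq, hq'⟩ | ⟨hq, hq'⟩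
    · omega
    · rw [hf0 p hp, hf1 q hq] at hpq; exact absurd hpq hux.ne
    · rw [hf0 p hp, hfS q hq hq'] at hpq
      exact absurd (hpq ▸ haSmem _ (by omega)) hunS
    · rw [hf0 p hp, hfT q hq] at hpq
      exact absurd (hpq ▸ haTmem _ (by omega)) hunT
    · rw [hf1 p hp, hf0 q hq] at hpq; exact absurd hpq.symm hux.ne
    · omega
    · rw [hf1 p hp, hfS q hq hq'] at hpq
      exact absurd (hpq ▸ haSmem _ (by omega)) hxnS
    · rw [hf1 p hp, hfT q hq] at hpq
      exact absurd (hpq ▸ haTmem _ (by omega)) hxnT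
    · rw [hfS p hp hp', hf0 q hq] at hpq
      exact absurd (hpq ▸ haSmem _ (by omega)) hunS
    · rw [hfS p hp hp', hf1 q hq] at hpq
      exact absurd (hpq ▸ haSmem _ (by omega)) hxnS
    · rw [hfS p hp hp', hfS q hq hq'] at hpq
      have := haSinj _ _ (by omega) (by omega) hpq; omega
    · rw [hfS p hp hp', hfT q hq] at hpq
      exact absurd (hpq ▸ haTmem _ (by omega)) (hSTd _ (haSmem _ (by omega)))
    · rw [hfT p hp, hf0 q hq] at hpq
      exact absurd (hpq ▸ haTmem _ (by omega)) hunT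
    · rw [hfT p hp, hf1 q hq] at hpq
      exact absurd (hpq ▸ haTmem _ (by omega)) hxnT
    · rw [hfT p hp, hfS q hq hq'] at hpq
      exact absurd (hpq.symm ▸ haTmem _ (by omega)) (hSTd _ (haSmem _ (by omega)))
    · rw [hfT p hp, hfT q hq] at hpq
      have := haTinj _ _ (by omega) (by omega) hpq; omega
  apply induced_doubleStar_exists G s f hinj
  intro p q
  rw [doubleStar_adj]
  have hps := p.isLt; have hqs := q.isLt
  rcases hcases p with hp | hp | ⟨hp, hp'⟩ | ⟨hp, hp'⟩ <;>
    rcases hcases q with hq | hq | ⟨hq, hq'⟩ | ⟨hq, hq'⟩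
  · rw [hf0 p hp, hf0 q hq]
    exact iff_of_false (G.loopless.irrefl u) (by omega)
  · rw [hf0 p hp, hf1 q hq]
    exact iff_of_true hux ⟨by omega, by omega⟩
  · rw [hf0 p hp, hfS q hq hq']
    exact iff_of_true (huS _ (haSmem _ (by omega))) ⟨by omega, by omega⟩
  · rw [hf0 p hp, hfT q hq]
    exact iff_of_false (huT _ (haTmem _ (by omega))) (by omega)
  · rw [hf1 p hp, hf0 q hq]
    exact iff_of_true hux.symm ⟨by omega, by omega⟩
  · rw [hf1 p hp, hf1 q hq]
    exact iff_of_false (G.loopless.irrefl x) (by omega)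
  · rw [hf1 p hp, hfS q hq hq']
    exact iff_of_false (hxS _ (haSmem _ (by omega))) (by omega)
  · rw [hf1 p hp, hfT q hq]
    exact iff_of_true (hxT _ (haTmem _ (by omega))) ⟨by omega, by omega⟩
  · rw [hfS p hp hp', hf0 q hq]
    exact iff_of_true (huS _ (haSmem _ (by omega))).symm ⟨by omega, by omega⟩
  · rw [hfS p hp hp', hf1 q hq]
    exact iff_of_false (fun h => hxS _ (haSmem _ (by omega)) h.symm) (by omega)
  · rw [hfS p hp hp', hfS q hq hq']
    refine iff_of_false ?_ (by omega)
    intro h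
    by_cases hco : (p:ℕ) = (q:ℕ)
    · rw [hco] at h; exact G.loopless.irrefl _ h
    · exact hSst _ (haSmem _ (by omega)) _ (haSmem _ (by omega))
        (fun he => hco (by have := haSinj _ _ (by omega) (by omega) he; omega)) h
  · rw [hfS p hp hp', hfT q hq]
    exact iff_of_false (hST _ (haSmem _ (by omega)) _ (haTmem _ (by omega))) (by omega)
  · rw [hfT p hp, hf0 q hq]
    exact iff_of_false (fun h => huT _ (haTmem _ (by omega)) h.symm) (by omega)
  · rw [hfT p hp, hf1 q hq]
    exact iff_of_true (hxT _ (haTmem _ (by omega))).symm ⟨by omega, by omega⟩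
  · rw [hfT p hp, hfS q hq hq']
    exact iff_of_false (fun h => hST _ (haSmem _ (by omega)) _ (haTmem _ (by omega)) h.symm) (by omega)
  · rw [hfT p hp, hfT q hq]
    refine iff_of_false ?_ (by omega)
    intro h
    by_cases hco : (p:ℕ) = (q:ℕ)
    · rw [hco] at h; exact G.loopless.irrefl _ h
    · exact hTst _ (haTmem _ (by omega)) _ (haTmem _ (by omega))
        (fun he => hco (by have := haTinj _ _ (by omega) (by omega) he; omega)) h

lemma ncard_finsetBiUnion_le {V α : Type*} (J : Finset α) (f : α → Set V) :
    (⋃ i ∈ J, f i).ncard ≤ ∑ i ∈ J, (f i).ncard := by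

  classical
  induction J using Finset.induction_on with
  | empty => simp
  | @insert a J' hnotmem ih =>
    rw [Finset.sum_insert hnotmem]
    have h1 : (⋃ i ∈ insert a J', f i) = f a ∪ ⋃ i ∈ J', f i := by
      ext x; simp
    rw [h1]
    calc (f a ∪ ⋃ i ∈ J', f i).ncard ≤ (f a).ncard + (⋃ i ∈ J', f i).ncard :=
          Set.ncard_union_le _ _
      _ ≤ (f a).ncard + ∑ i ∈ J', (f i).ncard := by omega

lemma template_k_le {V : Type*} [Fintype V] (G : SimpleGraph V) (s : ℕ) (L0 : Set V) (k : ℕ)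
    (L : Fin k → Set V) (hT : IsTemplate G s L0 L) (hw : 2 ≤ G.cliqueNum) :
    k ≤ G.cliqueNum := by

  classical
  set w := G.cliqueNum with hwdef
  by_contra hk
  push_neg at hk
  obtain ⟨-, hdisj, -, -, hsize, hnon⟩ := hT
  have hV : Nonempty V := by
    rcases isEmpty_or_nonempty V with hE | hN
    · exfalso
      have h0 := (hsize ⟨0, by omega⟩).1
      have : (L ⟨0, by omega⟩) = ∅ := Set.eq_empty_of_isEmpty _
      rw [this] at h0
      simp at h0
      have : 0 < w ^ (s+5) := Nat.pow_pos (by omega)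
      omega
    · exact hN
  -- greedy construction
  have key : ∀ J : Finset (Fin k), J.card ≤ w + 1 →
      ∃ g : Fin k → V, (∀ i ∈ J, g i ∈ L i) ∧
        (∀ i ∈ J, ∀ i' ∈ J, i ≠ i' → G.Adj (g i) (g i')) := by
    intro J
    induction J using Finset.induction_on with
    | empty => intro _; exact ⟨fun _ => Classical.arbitrary V, by simp, by simp⟩
    | @insert a J' hnm ih =>
      intro hcard
      rw [Finset.card_insert_of_notMem hnm] at hcard
      obtain ⟨g, hg1, hg2⟩ := ih (by omega)
      set Bad : Set V := ⋃ i ∈ J', {y ∈ L a | ¬ G.Adj (g i) y} with hBad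
      have hBadcard : Bad.ncard ≤ w * w ^ (s+3) := by
        calc Bad.ncard ≤ ∑ i ∈ J', ({y ∈ L a | ¬ G.Adj (g i) y}).ncard :=
              ncard_finsetBiUnion_le _ _
          _ ≤ ∑ _i ∈ J', w ^ (s+3) := by
              apply Finset.sum_le_sum
              intro i hi
              exact hnon i a (fun he => hnm (he ▸ hi)) (g i) (hg1 i hi)
          _ = J'.card * w ^ (s+3) := by rw [Finset.sum_const, smul_eq_mul]
          _ ≤ w * w ^ (s+3) := Nat.mul_le_mul_right _ (by omega)
      have hLa : w ^ (s+5) ≤ (L a).ncard := (hsize a).1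
      have hlt : Bad.ncard < (L a).ncard := by
        have h1 : w * w ^ (s+3) = w ^ (s+4) := by rw [← pow_succ']
        have h2 : w ^ (s+4) < w ^ (s+5) :=
          Nat.pow_lt_pow_right (by omega) (by omega)
        omega
      have hne : ((L a) \ Bad).Nonempty := by
        by_contra hemp
        rw [Set.not_nonempty_iff_eq_empty] at hemp
        have := Set.ncard_le_ncard_diff_add_ncard (L a) Bad (Set.toFinite _)
        rw [hemp] at this
        simp at this
        omega
      obtain ⟨y, hyL, hyB⟩ := hne
      refine ⟨Function.update g a y, ?_, ?_⟩
      · intro i hi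
        rcases Finset.mem_insert.mp hi with rfl | hi
        · simpa using hyL
        · rw [Function.update_of_ne (fun (he : i = a) => hnm (he ▸ hi))]
          exact hg1 i hi
      · have hadj : ∀ i ∈ J', G.Adj (g i) y := by
          intro i hi
          by_contra hna
          exact hyB (Set.mem_biUnion hi ⟨hyL, hna⟩)
        intro i hi i' hi' hne'
        rcases Finset.mem_insert.mp hi with hia | hiJ <;>
          rcases Finset.mem_insert.mp hi' with hia' | hiJ'
        · exact absurd (hia.trans hia'.symm) hne'
        · rw [hia, Function.update_self, Function.update_of_ne (fun (he : i' = a) => hnm (he ▸ hiJ'))]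
          exact (hadj i' hiJ').symm
        · rw [hia', Function.update_self, Function.update_of_ne (fun (he : i = a) => hnm (he ▸ hiJ))]
          exact hadj i hiJ
        · rw [Function.update_of_ne (fun (he : i = a) => hnm (he ▸ hiJ)),
            Function.update_of_ne (fun (he : i' = a) => hnm (he ▸ hiJ'))]
          exact hg2 i hiJ i' hiJ' hne'
  obtain ⟨J, -, hJcard⟩ := Finset.exists_subset_card_eq
    (show w + 1 ≤ (Finset.univ : Finset (Fin k)).card by simp; omega)
  obtain ⟨g, hg1, hg2⟩ := key J (by omega)
  have hginj : Set.InjOn g J := by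
    intro i hi i' hi' he
    by_contra hne
    have h1 := hg1 i (by simpa using hi)
    have h2 := hg1 i' (by simpa using hi')
    rw [he] at h1
    exact (Set.disjoint_left.mp (hdisj hne) h1 h2).elim
  have hcl : G.IsClique ((J.image g : Finset V) : Set V) := by
    intro a ha b hb hab
    simp only [Finset.coe_image, Set.mem_image, Finset.mem_coe] at ha hb
    obtain ⟨i, hi, rfl⟩ := ha
    obtain ⟨i', hi', rfl⟩ := hb
    have hne' : i ≠ i' := fun he => hab (by rw [he])
    exact hg2 i hi i' hi' hne'
  have hcard : (J.image g).card = w + 1 := by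
    rw [Finset.card_image_of_injOn hginj, hJcard]
  have hle : (J.image g).card ≤ G.cliqueNum :=
    SimpleGraph.IsClique.card_le_cliqueNum (tc := hcl)
  omega

end Aux

/-- If `u ∈ M_I` and `j ∉ I`, then for each `i ∈ I` fewer than `ω^s` neighbours `v` of `u`
lie in some `M_J` with `J ⊆ {1,…,k} \ {i,j}`; hence fewer than `ω^{s+1}` neighbours `v` of
`u` lie in some `M_J` with `J ⊆ {1,…,k} \ {j}` and `I ⊄ J`. -/

theorem template_incomp {V : Type*} [Fintype V] (G : SimpleGraph V) (s : ℕ) (hs : 1 ≤ s)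
    (hfree : IsInducedFree G (doubleStarGraph s))
    (L0 : Set V) (k : ℕ) (L : Fin k → Set V) (hT : IsOptimalTemplate G s L0 L)
    (I : Set (Fin k)) (u : V) (hu : u ∈ templatePart G s L0 L I)
    (j : Fin k) (hj : j ∉ I) :
    (∀ i ∈ I,
      ({v | G.Adj u v ∧ ∃ J : Set (Fin k), i ∉ J ∧ j ∉ J ∧
        v ∈ templatePart G s L0 L J}).ncard < G.cliqueNum ^ s) ∧
    ({v | G.Adj u v ∧ ∃ J : Set (Fin k), j ∉ J ∧ ¬ I ⊆ J ∧
      v ∈ templatePart G s L0 L J}).ncard < G.cliqueNum ^ (s+1) := by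
  classical
  set w := G.cliqueNum with hwdef
  obtain ⟨huN, huP, huI⟩ := hu
  obtain ⟨huV, i₀, x₀, hx₀L, hux₀⟩ := huN
  have hw : 2 ≤ w := by
    have hcl2 : G.IsClique (({u, x₀} : Finset V) : Set V) := by
      intro a ha b hb hab
      simp only [Finset.coe_insert, Set.mem_insert_iff, Finset.coe_singleton,
        Set.mem_singleton_iff] at ha hb
      rcases ha with rfl | rfl <;> rcases hb with rfl | rfl
      · exact absurd rfl hab
      · exact hux₀
      · exact hux₀.symm
      · exact absurd rfl hab
    have hle := SimpleGraph.IsClique.card_le_cliqueNum (tc := hcl2)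
    rwa [Finset.card_pair (G.ne_of_adj hux₀)] at hle
  have hk : k ≤ w := template_k_le G s L0 k L hT.1 hw
  obtain ⟨-, -, -, -, hsize, hnon⟩ := hT.1
  -- the family of "bad neighbour" sets
  set X : Fin k → Set V := fun i =>
    {v | G.Adj u v ∧ ∃ J : Set (Fin k), i ∉ J ∧ j ∉ J ∧ v ∈ templatePart G s L0 L J} with hX
  have part1 : ∀ i ∈ I, (X i).ncard < w ^ s := by
    intro i hiI
    by_contra hbig
    push_neg at hbig
    obtain ⟨S, hSsub, hSst, hScard⟩ := stable_of_large G s hw _ hbig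
    obtain ⟨x, hxL, hux⟩ := (huI i).mpr hiI
    have hij : i ≠ j := fun he => hj (he ▸ hiI)
    -- facts about vertices of S
    have hSfacts : ∀ a ∈ S, G.Adj u a ∧ a ∉ templateVerts L0 L ∧
        (∀ y ∈ L i, ¬ G.Adj a y) ∧ (∀ y ∈ L j, ¬ G.Adj a y) := by
      intro a haS
      obtain ⟨hua, J, hiJ, hjJ, haJ⟩ := hSsub haS
      obtain ⟨⟨haV, -⟩, -, haI⟩ := haJ
      refine ⟨hua, haV, ?_, ?_⟩
      · intro y hy hadj
        exact hiJ ((haI i).mp ⟨y, hy, hadj⟩)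
      · intro y hy hadj
        exact hjJ ((haI j).mp ⟨y, hy, hadj⟩)
    -- neighbours of x in L j
    set P : Set V := {y ∈ L j | G.Adj x y} with hP
    have hPbig : w ^ s ≤ P.ncard := by
      have hsubP : L j ⊆ P ∪ {y ∈ L j | ¬ G.Adj x y} := by
        intro y hy
        by_cases hadj : G.Adj x y
        · exact Or.inl ⟨hy, hadj⟩
        · exact Or.inr ⟨hy, hadj⟩
      have h1 : (L j).ncard ≤ P.ncard + ({y ∈ L j | ¬ G.Adj x y}).ncard :=
        le_trans (Set.ncard_le_ncard hsubP (Set.toFinite _)) (Set.ncard_union_le _ _)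
      have h2 : ({y ∈ L j | ¬ G.Adj x y}).ncard ≤ w ^ (s+3) := hnon i j hij x hxL
      have h3 : w ^ (s+5) ≤ (L j).ncard := (hsize j).1
      have e1 : w ^ (s+5) = w ^ (s+3) * w ^ 2 := by ring
      have e2 : 2 ≤ w ^ 2 := by nlinarith
      have e3 : w ^ s ≤ w ^ (s+3) := Nat.pow_le_pow_right (by omega) (by omega)
      nlinarith
    obtain ⟨T, hTsub, hTst, hTcard⟩ := stable_of_large G s hw P hPbig
    -- pass to finsets
    have hSfin : S.Finite := Set.toFinite S
    have hTfin : T.Finite := Set.toFinite T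
    set Sf := hSfin.toFinset with hSf
    set Tf := hTfin.toFinset with hTf
    have hmemS : ∀ a, a ∈ Sf ↔ a ∈ S := fun a => Set.Finite.mem_toFinset hSfin
    have hmemT : ∀ a, a ∈ Tf ↔ a ∈ T := fun a => Set.Finite.mem_toFinset hTfin
    have hLjVerts : ∀ b, b ∈ L j → b ∈ templateVerts L0 L := by
      intro b hb
      exact Or.inr (Set.mem_iUnion.mpr ⟨j, hb⟩)
    have hLiVerts : ∀ b, b ∈ L i → b ∈ templateVerts L0 L := by
      intro b hb
      exact Or.inr (Set.mem_iUnion.mpr ⟨i, hb⟩)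
    refine build_doubleStar G s u x Sf Tf hux ?_ ?_ ?_ ?_ ?_ ?_ ?_ ?_ ?_ ?_ ?_ ?_ hfree
    · rw [hSf, ← Set.ncard_eq_toFinset_card S hSfin]; exact hScard
    · rw [hTf, ← Set.ncard_eq_toFinset_card T hTfin]; exact hTcard
    · rw [hSf, Set.Finite.coe_toFinset]; exact hSst
    · rw [hTf, Set.Finite.coe_toFinset]; exact hTst
    · intro a ha; exact (hSfacts a ((hmemS a).mp ha)).1
    · intro b hb; exact (hTsub ((hmemT b).mp hb)).2
    · intro a ha hadj
      exact (hSfacts a ((hmemS a).mp ha)).2.2.1 x hxL hadj.symm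
    · intro b hb hadj
      exact hj ((huI j).mp ⟨b, (hTsub ((hmemT b).mp hb)).1, hadj⟩)
    · intro a ha b hb
      exact (hSfacts a ((hmemS a).mp ha)).2.2.2 b (hTsub ((hmemT b).mp hb)).1
    · intro a ha hmem
      exact (hSfacts a ((hmemS a).mp ha)).2.1
        (hLjVerts a (hTsub ((hmemT a).mp hmem)).1)
    · intro hmem
      exact (hSfacts x ((hmemS x).mp hmem)).2.1 (hLiVerts x hxL)
    · intro hmem
      exact huV (hLjVerts u (hTsub ((hmemT u).mp hmem)).1)
  refine ⟨part1, ?_⟩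
  -- second part
  have hYsub : {v | G.Adj u v ∧ ∃ J : Set (Fin k), j ∉ J ∧ ¬ I ⊆ J ∧
      v ∈ templatePart G s L0 L J} ⊆ ⋃ i ∈ I.toFinset, X i := by
    rintro v ⟨huv, J, hjJ, hIJ, hvJ⟩
    obtain ⟨i, hiI, hiJ⟩ := Set.not_subset.mp hIJ
    exact Set.mem_biUnion (Set.mem_toFinset.mpr hiI) ⟨huv, J, hiJ, hjJ, hvJ⟩
  have hw1 : 1 ≤ w ^ s := Nat.one_le_pow _ _ (by omega)
  calc ({v | G.Adj u v ∧ ∃ J : Set (Fin k), j ∉ J ∧ ¬ I ⊆ J ∧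
        v ∈ templatePart G s L0 L J}).ncard
      ≤ (⋃ i ∈ I.toFinset, X i).ncard :=
        Set.ncard_le_ncard hYsub (Set.toFinite _)
    _ ≤ ∑ i ∈ I.toFinset, (X i).ncard := ncard_finsetBiUnion_le _ _
    _ ≤ ∑ _i ∈ I.toFinset, (w ^ s - 1) := by
        apply Finset.sum_le_sum
        intro i hi
        have := part1 i (Set.mem_toFinset.mp hi)
        omega
    _ = I.toFinset.card * (w ^ s - 1) := by rw [Finset.sum_const, smul_eq_mul]
    _ ≤ w * (w ^ s - 1) := by
        apply Nat.mul_le_mul_right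
        calc I.toFinset.card ≤ (Finset.univ : Finset (Fin k)).card :=
              Finset.card_le_univ _
          _ = k := by simp
          _ ≤ w := hk
    _ < w ^ (s+1) := by
        have e : w ^ (s+1) = w * w ^ s := by ring
        have : w * (w ^ s - 1) + w = w * w ^ s := by
          have : w ^ s - 1 + 1 = w ^ s := by omega
          nlinarith [this]
        omega
end

section
/- Let s ≥ 1 be an integer, let G be an H_s-free graph with clique number ω, and let 𝓛 = (L_0, L_1, …, L_k) be an optimal s-template in G. Then for each integer m ≥ 0, the union of the sets M_I over all m-small subsets I ⊆ {1,…,k} induces a subgraph of chromatic number at most 2ω(m + ω^{s+1}). -/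
open SimpleGraph Set

section AuxLemmasForTemplate

lemma two_pow_pred_le_factorial (j : ℕ) : 2 ^ (j - 1) ≤ Nat.factorial j := by
  induction j with
  | zero => simp [Nat.factorial]
  | succ n ih =>
    cases n with
    | zero => simp [Nat.factorial]
    | succ m =>
      have h1 : 2 ^ (m + 2 - 1) = 2 * 2 ^ (m + 1 - 1) := by
        have : m + 2 - 1 = (m + 1 - 1) + 1 := by omega
        rw [this, pow_succ]; ring
      rw [h1, Nat.factorial_succ]
      have h2 : 2 ≤ m + 2 := by omega
      exact Nat.mul_le_mul h2 ih

lemma sum_two_pow (m : ℕ) : ∑ i ∈ Finset.range m, (2:ℕ) ^ i = 2 ^ m - 1 := by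
  induction m with
  | zero => simp
  | succ n ih =>
    rw [Finset.sum_range_succ, ih, pow_succ]
    have : 1 ≤ (2:ℕ)^n := Nat.one_le_two_pow
    omega

/-- Key bound: `(n+1)^m ≤ 3 n^m` when `m ≤ n`. -/
lemma key3 {n m : ℕ} (h : m ≤ n) : (n + 1) ^ m ≤ 3 * n ^ m := by
  rcases Nat.eq_zero_or_pos m with hm | hm
  · subst hm; simp
  have hn : 1 ≤ n := le_trans hm h
  have hexp : (n + 1) ^ m = ∑ i ∈ Finset.range (m + 1), n ^ i * m.choose i := by
    have := add_pow n 1 m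
    simpa using this
  rw [hexp, Finset.sum_range_succ, Nat.choose_self, mul_one]
  have hterm : ∀ i ∈ Finset.range m, 2 ^ (m - 1) * (n ^ i * m.choose i) ≤ n ^ m * 2 ^ i := by
    intro i hi
    have hi' : i < m := Finset.mem_range.mp hi
    set j := m - i with hjdef
    have hj1 : 1 ≤ j := by omega
    have hC : m.choose i = m.choose j := by
      rw [hjdef, Nat.choose_symm (le_of_lt hi')]
    have h1 : m.choose j * 2 ^ (j - 1) ≤ m ^ j := by
      have ha : m.choose j * 2 ^ (j - 1) ≤ m.choose j * Nat.factorial j :=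
        Nat.mul_le_mul_left _ (two_pow_pred_le_factorial j)
      have hb : m.choose j * Nat.factorial j = m.descFactorial j := by
        rw [Nat.descFactorial_eq_factorial_mul_choose]; ring
      rw [hb] at ha
      exact le_trans ha (Nat.descFactorial_le_pow _ _)
    have h2 : m ^ j ≤ n ^ j := Nat.pow_le_pow_left h _
    have hsplit : 2 ^ (m - 1) = 2 ^ i * 2 ^ (j - 1) := by
      rw [← pow_add]; congr 1; omega
    have hnm : n ^ m = n ^ i * n ^ j := by rw [← pow_add]; congr 1; omega
    calc 2 ^ (m-1) * (n ^ i * m.choose i)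
        = (n ^ i * (m.choose j * 2 ^ (j-1))) * 2 ^ i := by rw [hsplit, hC]; ring
      _ ≤ (n ^ i * n ^ j) * 2 ^ i := by
          have := le_trans h1 h2
          exact Nat.mul_le_mul_right _ (Nat.mul_le_mul_left _ this)
      _ = n ^ m * 2 ^ i := by rw [hnm]
  have hsum : 2 ^ (m - 1) * (∑ i ∈ Finset.range m, n ^ i * m.choose i)
      ≤ n ^ m * (2 ^ m - 1) := by
    rw [Finset.mul_sum]
    calc ∑ i ∈ Finset.range m, 2 ^ (m-1) * (n ^ i * m.choose i)
        ≤ ∑ i ∈ Finset.range m, n ^ m * 2 ^ i := Finset.sum_le_sum hterm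
      _ = n ^ m * ∑ i ∈ Finset.range m, (2:ℕ) ^ i := by rw [Finset.mul_sum]
      _ = n ^ m * (2 ^ m - 1) := by rw [sum_two_pow]
  have h2m : (2:ℕ) ^ m - 1 ≤ 2 * 2 ^ (m - 1) := by
    have : (2:ℕ) ^ m = 2 ^ (m - 1) * 2 := by
      rw [← pow_succ]; congr 1; omega
    omega
  have hT : (∑ i ∈ Finset.range m, n ^ i * m.choose i) ≤ 2 * n ^ m := by
    have hpos : 0 < 2 ^ (m - 1) := Nat.pow_pos (by norm_num)
    have hfin : 2 ^ (m-1) * (∑ i ∈ Finset.range m, n ^ i * m.choose i)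
        ≤ 2 ^ (m-1) * (2 * n ^ m) := by
      calc 2 ^ (m-1) * (∑ i ∈ Finset.range m, n ^ i * m.choose i)
          ≤ n ^ m * (2 ^ m - 1) := hsum
        _ ≤ n ^ m * (2 * 2 ^ (m-1)) := Nat.mul_le_mul_left _ h2m
        _ = 2 ^ (m-1) * (2 * n ^ m) := by ring
    exact Nat.le_of_mul_le_mul_left hfin hpos
  omega

/-- `(a+b).choose b ≤ (a+1)^b`. -/
lemma choose_add_le_pow (a : ℕ) : ∀ b : ℕ, (a + b).choose b ≤ (a + 1) ^ b := by
  intro b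
  induction b with
  | zero => simp
  | succ b ih =>
    have key := Nat.add_one_mul_choose_eq (a + b) b
    have h1 : (a + (b+1)).choose (b+1) * (b+1) = (a + b + 1) * (a+b).choose b := by
      have he : a + (b+1) = (a+b) + 1 := by omega
      rw [he]
      simpa [Nat.succ_eq_add_one] using key.symm
    have h2 : (a + b + 1) * (a+b).choose b ≤ ((a+1) * (b+1)) * (a+1)^b := by
      have hab : a + b + 1 ≤ (a+1) * (b+1) := by nlinarith
      exact Nat.mul_le_mul hab ih
    have h3 : (a + (b+1)).choose (b+1) * (b+1) ≤ ((a+1)^(b+1)) * (b+1) := by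
      rw [h1]
      calc (a + b + 1) * (a+b).choose b ≤ ((a+1) * (b+1)) * (a+1)^b := h2
        _ = ((a+1)^(b+1)) * (b+1) := by ring
    exact Nat.le_of_mul_le_mul_right h3 (by omega)

lemma sq_lt_two_pow (s : ℕ) : (s+1)^2 < 2^(s+4) := by
  induction s with
  | zero => norm_num
  | succ n ih =>
    have h2 : (2:ℕ)^(n+1+4) = 2 * 2^(n+4) := by ring
    cases n with
    | zero => norm_num
    | succ p =>
      have e1 : (p+1+1+1)^2 ≤ 2*(p+1+1)^2 + 1 := by
        have e2 : (p+1+1+1)^2 = p^2+6*p+9 := by ring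
        have e3 : 2*(p+1+1)^2 + 1 = 2*p^2+8*p+9 := by ring
        rw [e2, e3]
        omega
      calc (p+1+1+1)^2 ≤ 2*(p+1+1)^2 + 1 := e1
        _ < 2 * 2^(p+1+4) := by linarith
        _ = 2^(p+1+1+4) := h2.symm

/-- main numeric bound: `(ω+s).choose ω ≤ ω^(s+4)` for `ω ≥ 2`. -/
lemma num_main {w s : ℕ} (hw : 2 ≤ w) : (w + s).choose w ≤ w ^ (s + 4) := by
  rcases le_or_gt s (2*w) with hcase | hcase
  · have h0 : (w + s).choose w = (w + s).choose s := by
      have h := Nat.choose_symm (n := w + s) (k := s) (by omega)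
      rw [← h]; congr 1; omega
    have h1 : (w + s).choose s ≤ (w+1)^s := choose_add_le_pow w s
    have hk : (w+1)^w ≤ 3 * w^w := key3 (le_refl w)
    have hk2 : (w+1)^(2*w) ≤ 9 * w^(2*w) := by
      have e1 : (w+1)^(2*w) = ((w+1)^w)^2 := by rw [← pow_mul]; ring_nf
      have e2 : w^(2*w) = (w^w)^2 := by rw [← pow_mul]; ring_nf
      have h9 : ((w+1)^w)^2 ≤ (3 * w^w)^2 := Nat.pow_le_pow_left hk 2
      rw [e1, e2]
      calc ((w+1)^w)^2 ≤ (3*w^w)^2 := h9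
        _ = 9 * (w^w)^2 := by ring
    have htrans : (w+1)^s * w^(2*w) ≤ (w+1)^(2*w) * w^s := by
      have hsplit : w^(2*w) = w^s * w^(2*w - s) := by rw [← pow_add]; congr 1; omega
      have hsplit2 : (w+1)^(2*w) = (w+1)^s * (w+1)^(2*w-s) := by rw [← pow_add]; congr 1; omega
      rw [hsplit, hsplit2]
      have hmono : w^(2*w-s) ≤ (w+1)^(2*w-s) := Nat.pow_le_pow_left (by omega) _
      calc (w+1)^s * (w^s * w^(2*w-s)) = ((w+1)^s * w^(2*w-s)) * w^s := by ring
        _ ≤ ((w+1)^s * (w+1)^(2*w-s)) * w^s :=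
            Nat.mul_le_mul_right _ (Nat.mul_le_mul_left _ hmono)
        _ = (w+1)^s * (w+1)^(2*w-s) * w^s := by ring
    have h9s : (w+1)^s ≤ 9 * w^s := by
      have hpos : 0 < w^(2*w) := Nat.pow_pos (by omega)
      have hfin : (w+1)^s * w^(2*w) ≤ ((9 * w^s)) * w^(2*w) := by
        calc (w+1)^s * w^(2*w) ≤ (w+1)^(2*w) * w^s := htrans
          _ ≤ (9 * w^(2*w)) * w^s := Nat.mul_le_mul_right _ hk2
          _ = (9 * w^s) * w^(2*w) := by ring
      exact Nat.le_of_mul_le_mul_right hfin hpos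
    have h16 : 9 * w^s ≤ w^(s+4) := by
      have h9 : (9:ℕ) ≤ w^4 := by
        calc (9:ℕ) ≤ 2^4 := by norm_num
          _ ≤ w^4 := Nat.pow_le_pow_left hw 4
      calc 9 * w^s ≤ w^4 * w^s := Nat.mul_le_mul_right _ h9
        _ = w^(s+4) := by rw [← pow_add]; ring_nf
    omega
  · have h0 : (w + s).choose w ≤ (s+1)^w := by
      have he : w + s = s + w := by omega
      rw [he]
      exact choose_add_le_pow s w
    rcases Nat.lt_or_ge w 3 with hw2 | hw3
    · have hw2' : w = 2 := by omega
      subst hw2'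
      calc (2 + s).choose 2 ≤ (s+1)^2 := h0
        _ ≤ 2^(s+4) := le_of_lt (sq_lt_two_pow s)
    · have main : ∀ t : ℕ, (2*w+1+t+1)^w ≤ w^(2*w+1+t+4) := by
        intro t
        induction t with
        | zero =>
          have h1 : (2*w+1+0+1)^w = 2^w * (w+1)^w := by
            have he : 2*w+1+0+1 = 2 * (w+1) := by ring
            rw [he, mul_pow]
          have h2 : 2^w * (w+1)^w ≤ 2^w * (3 * w^w) :=
            Nat.mul_le_mul_left _ (key3 (le_refl w))
          have h3 : (2:ℕ)^w ≤ w^w := Nat.pow_le_pow_left hw _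
          have h4 : (3:ℕ) ≤ w^5 := by
            calc (3:ℕ) ≤ 2^5 := by norm_num
              _ ≤ w^5 := Nat.pow_le_pow_left hw _
          calc (2*w+1+0+1)^w = 2^w * (w+1)^w := h1
            _ ≤ 2^w * (3 * w^w) := h2
            _ ≤ w^w * (w^5 * w^w) :=
                Nat.mul_le_mul h3 (Nat.mul_le_mul_right _ h4)
            _ = w^(w + 5 + w) := by rw [← pow_add, ← pow_add]; congr 1; omega
            _ ≤ w^(2*w+1+0+4) := Nat.pow_le_pow_right (by omega) (by omega)
        | succ t ih =>
          have hstep : (2*w+1+(t+1)+1)^w ≤ 3 * (2*w+1+t+1)^w := by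
            have he : 2*w+1+(t+1)+1 = (2*w+1+t+1) + 1 := by ring
            rw [he]
            exact key3 (by omega)
          calc (2*w+1+(t+1)+1)^w ≤ 3 * (2*w+1+t+1)^w := hstep
            _ ≤ 3 * w^(2*w+1+t+4) := Nat.mul_le_mul_left _ ih
            _ ≤ w * w^(2*w+1+t+4) := Nat.mul_le_mul_right _ (by omega)
            _ = w^(2*w+1+(t+1)+4) := by
                rw [← pow_succ']
                try congr 1
                try omega
      have hmain := main (s - (2*w+1))
      have heq : 2*w+1+(s - (2*w+1))+1 = s + 1 := by omega
      have heq2 : 2*w+1+(s-(2*w+1))+4 = s + 4 := by omega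
      rw [heq, heq2] at hmain
      exact le_trans h0 hmain


lemma ramsey_aux {V : Type*} [Fintype V] (G : SimpleGraph V) :
    ∀ (n c s : ℕ) (A : Set V), c + s ≤ n → (c + s).choose c ≤ A.ncard →
    (∃ S : Set V, S ⊆ A ∧ IsStableSet G S ∧ S.ncard = s) ∨
    (∃ K : Set V, K ⊆ A ∧ G.IsClique K ∧ K.ncard = c + 1) := by
  intro n
  induction n with
  | zero =>
    intro c s A hn hcard
    have hc : c = 0 := by omega
    have hs : s = 0 := by omega
    subst hc; subst hs
    left
    exact ⟨∅, empty_subset _, fun a ha => absurd ha (notMem_empty a), by simp⟩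
  | succ n ih =>
    intro c s A hn hcard
    rcases Nat.eq_zero_or_pos s with hs | hs
    · subst hs
      left
      exact ⟨∅, empty_subset _, fun a ha => absurd ha (notMem_empty a), by simp⟩
    rcases Nat.eq_zero_or_pos c with hc | hc
    · subst hc
      right
      have hA : 0 < A.ncard := by
        have : (0 + s).choose 0 = 1 := Nat.choose_zero_right _
        omega
      obtain ⟨v, hv⟩ := (Set.ncard_pos (A.toFinite)).mp hA
      refine ⟨{v}, by simpa using hv, ?_, by simp⟩
      intro a ha b hb hab
      simp only [mem_singleton_iff] at ha hb
      subst ha; subst hb; exact absurd rfl hab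
    obtain ⟨c', rfl⟩ : ∃ c', c = c' + 1 := ⟨c - 1, by omega⟩
    obtain ⟨s', rfl⟩ : ∃ s', s = s' + 1 := ⟨s - 1, by omega⟩
    have hA : 0 < A.ncard := by
      have := Nat.choose_pos (show c'+1 ≤ c'+1+(s'+1) by omega)
      omega
    obtain ⟨v, hv⟩ := (Set.ncard_pos (A.toFinite)).mp hA
    set B : Set V := {w ∈ A | w ≠ v ∧ G.Adj v w} with hBdef
    set C : Set V := {w ∈ A | w ≠ v ∧ ¬ G.Adj v w} with hCdef
    have hsub : A ⊆ insert v (B ∪ C) := by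
      intro w hw
      by_cases hwv : w = v
      · subst hwv; exact mem_insert _ _
      by_cases hadj : G.Adj v w
      · exact mem_insert_of_mem _ (Or.inl ⟨hw, hwv, hadj⟩)
      · exact mem_insert_of_mem _ (Or.inr ⟨hw, hwv, hadj⟩)
    have hcardsum : A.ncard ≤ B.ncard + C.ncard + 1 := by
      calc A.ncard ≤ (insert v (B ∪ C)).ncard :=
            Set.ncard_le_ncard hsub (Set.toFinite _)
        _ ≤ (B ∪ C).ncard + 1 := Set.ncard_insert_le _ _
        _ ≤ B.ncard + C.ncard + 1 := by
            have := Set.ncard_union_le B C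
            omega
    have hpascal : (c'+1+(s'+1)).choose (c'+1)
        = (c'+(s'+1)).choose c' + (c'+1+s').choose (c'+1) := by
      have he : c'+1+(s'+1) = (c'+s'+1) + 1 := by omega
      rw [he, Nat.choose_succ_succ]
      congr 2
      omega
    rcases le_or_gt ((c'+(s'+1)).choose c') B.ncard with hB | hB
    · rcases ih c' (s'+1) B (by omega) hB with hres | hres
      · left
        obtain ⟨S, hS1, hS2, hS3⟩ := hres
        exact ⟨S, fun x hx => (hS1 hx).1, hS2, hS3⟩
      · right
        obtain ⟨K, hK1, hK2, hK3⟩ := hres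
        refine ⟨insert v K, ?_, ?_, ?_⟩
        · intro x hx
          rcases mem_insert_iff.mp hx with h | h
          · subst h; exact hv
          · exact (hK1 h).1
        · apply hK2.insert
          intro b hb _
          exact ((hK1 hb).2.2)
        · rw [Set.ncard_insert_of_notMem (fun hvK => (hK1 hvK).2.1 rfl) (K.toFinite)]
          omega
    · have hC : (c'+1+s').choose (c'+1) ≤ C.ncard := by omega
      rcases ih (c'+1) s' C (by omega) hC with hres | hres
      · left
        obtain ⟨S, hS1, hS2, hS3⟩ := hres
        refine ⟨insert v S, ?_, ?_, ?_⟩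
        · intro x hx
          rcases mem_insert_iff.mp hx with h | h
          · subst h; exact hv
          · exact (hS1 h).1
        · intro a ha b hb hab
          rcases mem_insert_iff.mp ha with h | h <;>
            rcases mem_insert_iff.mp hb with h' | h'
          · subst h; subst h'; exact absurd rfl hab
          · subst h; exact (hS1 h').2.2
          · subst h'
            intro hadj
            exact (hS1 h).2.2 hadj.symm
          · exact hS2 a h b h' hab
        · rw [Set.ncard_insert_of_notMem (fun hvS => (hS1 hvS).2.1 rfl) (S.toFinite)]
          omega
      · right
        obtain ⟨K, hK1, hK2, hK3⟩ := hres
        exact ⟨K, fun x hx => (hK1 hx).1, hK2, hK3⟩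


lemma exists_not_mem_of_ncard_lt {d : ℕ} (S : Set (Fin d)) (h : S.ncard < d) :
    ∃ c : Fin d, c ∉ S := by
  by_contra hc
  push_neg at hc
  have : S = Set.univ := Set.eq_univ_iff_forall.mpr hc
  rw [this, Set.ncard_univ] at h
  simp [Nat.card_eq_fintype_card] at h

lemma greedy_colorable {W : Type*} [Fintype W] (G : SimpleGraph W) (key : W → ℕ)
    (hinj : Function.Injective key) (d : ℕ)
    (h : ∀ v : W, ({w | G.Adj v w ∧ key w < key v}).ncard < d) :
    G.Colorable d := by
  classical
  cases isEmpty_or_nonempty W with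
  | inl hW => exact SimpleGraph.Colorable.of_isEmpty (G := G) d
  | inr hW =>
    have hd : 0 < d := lt_of_le_of_lt (Nat.zero_le _) (h (Classical.arbitrary W))
    have main : ∀ (n : ℕ) (A : Finset W), A.card = n →
        ∃ f : W → Fin d, ∀ v ∈ A, ∀ w ∈ A, G.Adj v w → f v ≠ f w := by
      intro n
      induction n with
      | zero =>
        intro A hA
        rw [Finset.card_eq_zero] at hA
        subst hA
        exact ⟨fun _ => ⟨0, hd⟩, by simp⟩
      | succ n ihn =>
        intro A hA
        have hne : A.Nonempty := by
          rw [← Finset.card_pos, hA]; omega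
        obtain ⟨v, hvA, hvmax⟩ := A.exists_max_image key hne
        obtain ⟨f', hf'⟩ := ihn (A.erase v) (by rw [Finset.card_erase_of_mem hvA, hA]; omega)
        set N : Set W := {w | G.Adj v w ∧ key w < key v} with hN
        have himg : (f' '' N).ncard < d :=
          lt_of_le_of_lt (Set.ncard_image_le (Set.toFinite _)) (h v)
        obtain ⟨c, hc⟩ := exists_not_mem_of_ncard_lt _ himg
        refine ⟨Function.update f' v c, ?_⟩
        intro v1 hv1 v2 hv2 hadj
        by_cases h1 : v1 = v <;> by_cases h2 : v2 = v
        · subst h1; subst h2; exact absurd hadj (G.irrefl)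
        · subst h1
          rw [Function.update_self, Function.update_of_ne h2]
          intro heq
          apply hc
          refine ⟨v2, ⟨hadj, ?_⟩, heq.symm⟩
          have hle := hvmax v2 hv2
          rcases lt_or_eq_of_le hle with hlt | heq2
          · exact hlt
          · exact absurd (hinj heq2) h2
        · subst h2
          rw [Function.update_self, Function.update_of_ne h1]
          intro heq
          apply hc
          refine ⟨v1, ⟨hadj.symm, ?_⟩, heq⟩
          have hle := hvmax v1 hv1
          rcases lt_or_eq_of_le hle with hlt | heq2
          · exact hlt
          · exact absurd (hinj heq2) h1
        · rw [Function.update_of_ne h1, Function.update_of_ne h2]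
          exact hf' v1 (Finset.mem_erase.mpr ⟨h1, hv1⟩) v2 (Finset.mem_erase.mpr ⟨h2, hv2⟩) hadj
    obtain ⟨f, hf⟩ := main (Finset.univ.card) Finset.univ rfl
    exact ⟨Coloring.mk f (fun {u w} hadj => hf u (Finset.mem_univ _) w (Finset.mem_univ _) hadj)⟩


/-- enumerate a finite set of known cardinality -/
lemma exists_enum {V : Type*} {A : Set V} (hA : A.Finite) {n : ℕ} (h : A.ncard = n) :
    ∃ g : Fin n → V, Function.Injective g ∧ (∀ i, g i ∈ A) := by
  classical
  have hc : hA.toFinset.card = n := by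
    rw [← Set.ncard_eq_toFinset_card A hA]
    exact h
  let e := hA.toFinset.equivFin
  refine ⟨fun i => (e.symm (Fin.cast hc.symm i) : V), ?_, ?_⟩
  · intro i j hij
    have := e.symm.injective (Subtype.coe_injective hij)
    simpa [Fin.ext_iff] using congrArg Fin.val this
  · intro i
    have := (e.symm (Fin.cast hc.symm i)).2
    rwa [Set.Finite.mem_toFinset] at this

lemma no_double_star_config {V : Type*} [Fintype V] (G : SimpleGraph V) {s : ℕ}
    (hs : 1 ≤ s) (hfree : IsInducedFree G (doubleStarGraph s))
    {v a : V} {Wst Sst : Set V}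
    (hva : G.Adj v a)
    (hWcard : Wst.ncard = s) (hScard : Sst.ncard = s)
    (hWstable : IsStableSet G Wst) (hSstable : IsStableSet G Sst)
    (hvW : ∀ w ∈ Wst, G.Adj v w) (haS : ∀ x ∈ Sst, G.Adj a x)
    (hvS : ∀ x ∈ Sst, ¬ G.Adj v x) (haW : ∀ w ∈ Wst, ¬ G.Adj a w)
    (hWS : ∀ w ∈ Wst, ∀ x ∈ Sst, ¬ G.Adj w x)
    (hvSmem : v ∉ Sst) (haWmem : a ∉ Wst)
    (hdisj : Disjoint Wst Sst) : False := by
  classical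
  obtain ⟨gW, hgWinj, hgWmem⟩ := exists_enum (Wst.toFinite) hWcard
  obtain ⟨gS, hgSinj, hgSmem⟩ := exists_enum (Sst.toFinite) hScard
  have hvne : v ≠ a := G.ne_of_adj hva
  have hvWmem : v ∉ Wst := fun h => G.irrefl (hvW v h)
  have haSmem : a ∉ Sst := fun h => G.irrefl (haS a h)
  set X : Set V := ({v, a} ∪ Wst ∪ Sst) with hX
  set F : Fin (2*s+2) → V := fun i =>
    if i.val = 0 then v
    else if i.val = 1 then a
    else if h : i.val < s + 2 then gW ⟨i.val - 2, by omega⟩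
    else gS ⟨i.val - (s+2), by have := i.isLt; omega⟩ with hF
  have hF0 : ∀ i : Fin (2*s+2), i.val = 0 → F i = v := by
    intro i h; simp only [hF]; rw [if_pos h]
  have hF1 : ∀ i : Fin (2*s+2), i.val = 1 → F i = a := by
    intro i h; simp only [hF]; rw [if_neg (by omega), if_pos h]
  have hFmid : ∀ (i : Fin (2*s+2)) (h2 : 2 ≤ i.val) (h3 : i.val ≤ s+1),
      F i = gW ⟨i.val - 2, by omega⟩ := by
    intro i h2 h3; simp only [hF]
    rw [if_neg (by omega), if_neg (by omega), dif_pos (by omega)]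
  have hFhigh : ∀ (i : Fin (2*s+2)) (h2 : s + 2 ≤ i.val),
      F i = gS ⟨i.val - (s+2), by have := i.isLt; omega⟩ := by
    intro i h2; simp only [hF]
    rw [if_neg (by omega), if_neg (by omega), dif_neg (by omega)]
  have hcat : ∀ i : Fin (2*s+2), i.val = 0 ∨ i.val = 1 ∨
      (2 ≤ i.val ∧ i.val ≤ s+1) ∨ (s+2 ≤ i.val) := by
    intro i; omega
  have hgWv : ∀ t, gW t ≠ v := fun t h => hvWmem (h ▸ hgWmem t)
  have hgWa : ∀ t, gW t ≠ a := fun t h => haWmem (h ▸ hgWmem t)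
  have hgSv : ∀ t, gS t ≠ v := fun t h => hvSmem (h ▸ hgSmem t)
  have hgSa : ∀ t, gS t ≠ a := fun t h => haSmem (h ▸ hgSmem t)
  have hgWS : ∀ t t', gW t ≠ gS t' := by
    intro t t' h
    exact (Set.disjoint_left.mp hdisj (hgWmem t)) (h ▸ hgSmem t')
  have hmem : ∀ i, F i ∈ X := by
    intro i
    rcases hcat i with h | h | ⟨h2, h3⟩ | h
    · rw [hF0 i h]; left; left; left; rfl
    · rw [hF1 i h]; left; left; right; rfl
    · rw [hFmid i h2 h3]; left; right; exact hgWmem _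
    · rw [hFhigh i h]; right; exact hgSmem _
  have hinj : Function.Injective F := by
    intro i j hij
    rcases hcat i with h | h | ⟨h2, h3⟩ | h <;> rcases hcat j with h' | h' | ⟨h2', h3'⟩ | h'
    · exact Fin.ext (by omega)
    · rw [hF0 i h, hF1 j h'] at hij; exact absurd hij hvne
    · rw [hF0 i h, hFmid j h2' h3'] at hij; exact absurd hij.symm (hgWv _)
    · rw [hF0 i h, hFhigh j h'] at hij; exact absurd hij.symm (hgSv _)
    · rw [hF1 i h, hF0 j h'] at hij; exact absurd hij.symm hvne
    · exact Fin.ext (by omega)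
    · rw [hF1 i h, hFmid j h2' h3'] at hij; exact absurd hij.symm (hgWa _)
    · rw [hF1 i h, hFhigh j h'] at hij; exact absurd hij.symm (hgSa _)
    · rw [hFmid i h2 h3, hF0 j h'] at hij; exact absurd hij (hgWv _)
    · rw [hFmid i h2 h3, hF1 j h'] at hij; exact absurd hij (hgWa _)
    · rw [hFmid i h2 h3, hFmid j h2' h3'] at hij
      have h5 := hgWinj hij
      have h6 := congrArg Fin.val h5
      simp only at h6
      exact Fin.ext (by omega)
    · rw [hFmid i h2 h3, hFhigh j h'] at hij; exact absurd hij (hgWS _ _)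
    · rw [hFhigh i h, hF0 j h'] at hij; exact absurd hij (hgSv _)
    · rw [hFhigh i h, hF1 j h'] at hij; exact absurd hij (hgSa _)
    · rw [hFhigh i h, hFmid j h2' h3'] at hij; exact absurd hij.symm (hgWS _ _)
    · rw [hFhigh i h, hFhigh j h'] at hij
      have h5 := hgSinj hij
      have h6 := congrArg Fin.val h5
      simp only at h6
      exact Fin.ext (by omega)
  haveI : Fintype ↥X := Fintype.ofFinite ↥X
  have hXcard : Fintype.card ↥X = 2*s+2 := by
    rw [← Nat.card_eq_fintype_card, Nat.card_coe_set_eq]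
    have e1 : X = insert v (insert a (Wst ∪ Sst)) := by
      rw [hX]
      simp [Set.insert_union, Set.union_assoc]
    have hna : a ∉ Wst ∪ Sst := by
      simp only [Set.mem_union]
      push_neg
      exact ⟨haWmem, haSmem⟩
    have hnv : v ∉ insert a (Wst ∪ Sst) := by
      simp only [Set.mem_insert_iff, Set.mem_union]
      push_neg
      exact ⟨hvne, hvWmem, hvSmem⟩
    have e2 : (Wst ∪ Sst).ncard = s + s := by
      rw [Set.ncard_union_eq hdisj (Wst.toFinite) (Sst.toFinite), hWcard, hScard]
    rw [e1, Set.ncard_insert_of_notMem hnv (Set.toFinite _),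
      Set.ncard_insert_of_notMem hna (Set.toFinite _), e2]
    omega
  have hbij : Function.Bijective (fun i => (⟨F i, hmem i⟩ : ↥X)) := by
    rw [Fintype.bijective_iff_injective_and_card]
    constructor
    · intro i j hij
      exact hinj (congrArg Subtype.val hij)
    · rw [hXcard, Fintype.card_fin]
  set E : Fin (2*s+2) ≃ ↥X := Equiv.ofBijective _ hbij with hE
  have hEval : ∀ i, (E i : V) = F i := fun i => rfl
  have hadj : ∀ i j : Fin (2*s+2),
      (G.induce X).Adj (E i) (E j) ↔ (doubleStarGraph s).Adj i j := by
    intro i j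
    have hLHS : (G.induce X).Adj (E i) (E j) ↔ G.Adj (F i) (F j) := by
      rw [SimpleGraph.comap_adj]
      rfl
    rw [hLHS]
    have hRHS : (doubleStarGraph s).Adj i j ↔ (¬ (i:ℕ) = (j:ℕ) ∧
        ((((i:ℕ) = 0 ∧ (j:ℕ) = 1) ∨ ((i:ℕ) = 0 ∧ 2 ≤ (j:ℕ) ∧ (j:ℕ) ≤ s+1) ∨
          ((i:ℕ) = 1 ∧ s+2 ≤ (j:ℕ))) ∨
         (((j:ℕ) = 0 ∧ (i:ℕ) = 1) ∨ ((j:ℕ) = 0 ∧ 2 ≤ (i:ℕ) ∧ (i:ℕ) ≤ s+1) ∨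
          ((j:ℕ) = 1 ∧ s+2 ≤ (i:ℕ))))) := by
      simp only [doubleStarGraph, SimpleGraph.fromRel_adj, ne_eq, Fin.ext_iff]
    rw [hRHS]
    rcases hcat i with h | h | ⟨h2, h3⟩ | h <;> rcases hcat j with h' | h' | ⟨h2', h3'⟩ | h'
    · rw [hF0 i h, hF0 j h']
      exact iff_of_false (G.irrefl) (by omega)
    · rw [hF0 i h, hF1 j h']
      exact iff_of_true hva (by omega)
    · rw [hF0 i h, hFmid j h2' h3']
      exact iff_of_true (hvW _ (hgWmem _)) (by omega)
    · rw [hF0 i h, hFhigh j h']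
      exact iff_of_false (hvS _ (hgSmem _)) (by omega)
    · rw [hF1 i h, hF0 j h']
      exact iff_of_true hva.symm (by omega)
    · rw [hF1 i h, hF1 j h']
      exact iff_of_false (G.irrefl) (by omega)
    · rw [hF1 i h, hFmid j h2' h3']
      exact iff_of_false (haW _ (hgWmem _)) (by omega)
    · rw [hF1 i h, hFhigh j h']
      exact iff_of_true (haS _ (hgSmem _)) (by omega)
    · rw [hFmid i h2 h3, hF0 j h']
      exact iff_of_true ((hvW _ (hgWmem _)).symm) (by omega)
    · rw [hFmid i h2 h3, hF1 j h']
      exact iff_of_false (fun hh => (haW _ (hgWmem _)) hh.symm) (by omega)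
    · rw [hFmid i h2 h3, hFmid j h2' h3']
      refine iff_of_false ?_ (by omega)
      intro hh
      by_cases hij : (⟨i.val - 2, by omega⟩ : Fin s) = ⟨j.val - 2, by omega⟩
      · rw [hij] at hh; exact G.irrefl hh
      · exact hWstable _ (hgWmem _) _ (hgWmem _) (fun hc => hij (hgWinj hc)) hh
    · rw [hFmid i h2 h3, hFhigh j h']
      exact iff_of_false (hWS _ (hgWmem _) _ (hgSmem _)) (by omega)
    · rw [hFhigh i h, hF0 j h']
      exact iff_of_false (fun hh => (hvS _ (hgSmem _)) hh.symm) (by omega)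
    · rw [hFhigh i h, hF1 j h']
      exact iff_of_true ((haS _ (hgSmem _)).symm) (by omega)
    · rw [hFhigh i h, hFmid j h2' h3']
      exact iff_of_false (fun hh => (hWS _ (hgWmem _) _ (hgSmem _)) hh.symm) (by omega)
    · rw [hFhigh i h, hFhigh j h']
      refine iff_of_false ?_ (by omega)
      intro hh
      by_cases hij : (⟨i.val - (s+2), by have := i.isLt; omega⟩ : Fin s)
          = ⟨j.val - (s+2), by have := j.isLt; omega⟩
      · rw [hij] at hh; exact G.irrefl hh
      · exact hSstable _ (hgSmem _) _ (hgSmem _) (fun hc => hij (hgSinj hc)) hh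
  have iso : (doubleStarGraph s) ≃g (G.induce X) := ⟨E, hadj _ _⟩
  exact hfree X ⟨iso.symm⟩


lemma ncard_iUnion_le_sum {V : Type*} [Fintype V] {k : ℕ} (f : Fin k → Set V) :
    (⋃ j, f j).ncard ≤ ∑ j : Fin k, (f j).ncard := by
  classical
  have e : (⋃ j, f j) = ↑(Finset.univ.biUnion (fun j => (f j).toFinite.toFinset)) := by
    ext x
    simp only [Set.mem_iUnion, Finset.coe_biUnion, Finset.mem_coe, Finset.mem_univ,
      Set.mem_iUnion, Set.Finite.mem_toFinset, Set.iUnion_true]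
  rw [e, Set.ncard_coe_finset]
  calc (Finset.univ.biUnion fun j => (f j).toFinite.toFinset).card
      ≤ ∑ j : Fin k, (f j).toFinite.toFinset.card := Finset.card_biUnion_le
    _ = ∑ j : Fin k, (f j).ncard := by
        apply Finset.sum_congr rfl
        intro j _
        rw [Set.ncard_eq_toFinset_card (f j) (f j).toFinite]

lemma pair_inj {Cn a e a' e' : ℕ} (he : e ≤ Cn) (he' : e' ≤ Cn)
    (h : a * (Cn+1) + e = a' * (Cn+1) + e') : a = a' ∧ e = e' := by
  have haa : a = a' := by
    rcases lt_trichotomy a a' with hlt | heq | hlt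
    · exfalso
      have hstep : (a+1) * (Cn+1) ≤ a' * (Cn+1) := Nat.mul_le_mul_right _ hlt
      have hmul : (a+1) * (Cn+1) = a * (Cn+1) + (Cn+1) := by ring
      omega
    · exact heq
    · exfalso
      have hstep : (a'+1) * (Cn+1) ≤ a * (Cn+1) := Nat.mul_le_mul_right _ hlt
      have hmul : (a'+1) * (Cn+1) = a' * (Cn+1) + (Cn+1) := by ring
      omega
  subst haa
  omega

lemma pair_mono {Cn a e a' e' : ℕ} (he : e ≤ Cn) (hlt : a < a') :
    a * (Cn+1) + e < a' * (Cn+1) + e' := by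
  have hstep : (a+1) * (Cn+1) ≤ a' * (Cn+1) := Nat.mul_le_mul_right _ hlt
  have hmul : (a+1) * (Cn+1) = a * (Cn+1) + (Cn+1) := by ring
  omega

lemma ncard_le_cliqueNum {V : Type*} [Fintype V] (G : SimpleGraph V) {K : Set V}
    (h : G.IsClique K) : K.ncard ≤ G.cliqueNum := by
  classical
  have hfin := K.toFinite
  have hcl : G.IsClique (hfin.toFinset : Finset V) := by
    rwa [Set.Finite.coe_toFinset]
  have hcard := SimpleGraph.IsClique.card_le_cliqueNum (tc := hcl)
  rwa [Set.ncard_eq_toFinset_card K hfin]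

lemma two_le_cliqueNum_of_adj {V : Type*} [Fintype V] {G : SimpleGraph V} {x y : V}
    (h : G.Adj x y) : 2 ≤ G.cliqueNum := by
  have hK : G.IsClique ({x, y} : Set V) := by
    intro a ha b hb hne
    simp only [Set.mem_insert_iff, Set.mem_singleton_iff] at ha hb
    rcases ha with rfl|rfl <;> rcases hb with rfl|rfl
    · exact absurd rfl hne
    · exact h
    · exact h.symm
    · exact absurd rfl hne
  have hle := ncard_le_cliqueNum G hK
  rwa [Set.ncard_pair (G.ne_of_adj h)] at hle

lemma clique_insert_bound {V : Type*} [Fintype V] {G : SimpleGraph V} {K : Set V} {v : V}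
    (hcl : G.IsClique K) (hadj : ∀ w ∈ K, G.Adj v w) (hv : v ∉ K) :
    K.ncard + 1 ≤ G.cliqueNum := by
  have hcl' : G.IsClique (insert v K) := hcl.insert (fun b hb _ => hadj b hb)
  have hle := ncard_le_cliqueNum G hcl'
  rwa [Set.ncard_insert_of_notMem hv (K.toFinite)] at hle

end AuxLemmasForTemplate

/-- The union of the sets `M_I` over all `m`-small `I` has chromatic number at most
`2 ω (m + ω^{s+1})`. -/
theorem template_small_chromatic {V : Type*} [Fintype V] (G : SimpleGraph V) (s : ℕ)
    (hs : 1 ≤ s) (hfree : IsInducedFree G (doubleStarGraph s))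
    (L0 : Set V) (k : ℕ) (L : Fin k → Set V) (hT : IsOptimalTemplate G s L0 L) (m : ℕ) :
    (G.induce {v | ∃ I : Set (Fin k), (templatePart G s L0 L I).ncard ≤ m ∧
        v ∈ templatePart G s L0 L I}).chromaticNumber
      ≤ ((2 * G.cliqueNum * (m + G.cliqueNum ^ (s+1)) : ℕ) : ℕ∞) := by
  classical
  set Ubig : Set V := {v | ∃ I : Set (Fin k), (templatePart G s L0 L I).ncard ≤ m ∧
      v ∈ templatePart G s L0 L I} with hUbig
  set N : ℕ := 2 * G.cliqueNum * (m + G.cliqueNum ^ (s+1)) with hN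
  suffices hcol : (G.induce Ubig).Colorable N by
    exact_mod_cast hcol.chromaticNumber_le
  by_cases hUe : Ubig = ∅
  · haveI : IsEmpty ↥Ubig := Set.isEmpty_coe_sort.mpr hUe
    exact SimpleGraph.Colorable.of_isEmpty (G := G.induce Ubig) N
  -- notation
  obtain ⟨hTemp, -⟩ := hT
  obtain ⟨hL0disj, hLdisj, hL0cl, hL0adj, hsize, hcross⟩ := hTemp
  -- ω ≥ 2
  obtain ⟨v₀, hv₀⟩ := Set.nonempty_iff_ne_empty.mpr hUe
  obtain ⟨I₀, hI₀le, hv₀I⟩ := hv₀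
  obtain ⟨hv₀nb, -, -⟩ := hv₀I
  obtain ⟨-, i₀, u₀, hu₀L, hu₀adj⟩ := hv₀nb
  have hω2 : 2 ≤ G.cliqueNum := two_le_cliqueNum_of_adj hu₀adj
  have hωpow : ∀ a b : ℕ, a ≤ b → G.cliqueNum ^ a ≤ G.cliqueNum ^ b :=
    fun a b hab => Nat.pow_le_pow_right (by omega) hab
  -- k ≤ ω
  have hkw : k ≤ G.cliqueNum := by
    by_contra hk
    push_neg at hk
    have claim : ∀ n : ℕ, n ≤ G.cliqueNum + 1 → ∃ (f : Fin n → V) (g : Fin n → Fin k),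
        (∀ t, f t ∈ L (g t)) ∧ Function.Injective g ∧
        (∀ t t', t ≠ t' → G.Adj (f t) (f t')) := by
      intro n
      induction n with
      | zero =>
        exact fun _ => ⟨Fin.elim0, Fin.elim0, fun t => t.elim0, fun t => t.elim0,
          fun t => t.elim0⟩
      | succ n ihn =>
        intro hn
        obtain ⟨f, g, hfmem, hginj, hfadj⟩ := ihn (by omega)
        have hfresh : ∃ i : Fin k, i ∉ Finset.univ.image g := by
          by_contra hc
          push_neg at hc
          have hsub : (Finset.univ : Finset (Fin k)) ⊆ Finset.univ.image g :=
            fun i _ => hc i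
          have h1 := Finset.card_le_card hsub
          have h2 : (Finset.univ.image g).card ≤ n := by
            calc (Finset.univ.image g).card ≤ (Finset.univ : Finset (Fin n)).card :=
                  Finset.card_image_le
              _ = n := by simp
          simp only [Finset.card_univ, Fintype.card_fin] at h1
          omega
        obtain ⟨i, hi⟩ := hfresh
        have hgne : ∀ t : Fin n, g t ≠ i := by
          intro t ht
          exact hi (Finset.mem_image.mpr ⟨t, Finset.mem_univ _, ht⟩)
        set B : Set V := ⋃ t : Fin n, {u ∈ L i | ¬ G.Adj (f t) u} with hB
        have hBcard : B.ncard ≤ n * G.cliqueNum^(s+3) := by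
          calc B.ncard ≤ ∑ t : Fin n, ({u ∈ L i | ¬ G.Adj (f t) u}).ncard :=
              ncard_iUnion_le_sum _
            _ ≤ ∑ _t : Fin n, G.cliqueNum^(s+3) := by
                apply Finset.sum_le_sum
                intro t _
                exact hcross (g t) i (hgne t) (f t) (hfmem t)
            _ = n * G.cliqueNum^(s+3) := by
                rw [Finset.sum_const]
                simp [mul_comm]
        have hLi : G.cliqueNum^(s+5) ≤ (L i).ncard := (hsize i).1
        have hnsub : ¬ (L i ⊆ B) := by
          intro hsub
          have h1 := Set.ncard_le_ncard hsub (B.toFinite)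
          have h2 : n * G.cliqueNum^(s+3) ≤ G.cliqueNum * G.cliqueNum^(s+3) :=
            Nat.mul_le_mul_right _ (by omega)
          have h3 : G.cliqueNum * G.cliqueNum^(s+3) = G.cliqueNum^(s+4) := by
            rw [← pow_succ']
          have h4 : G.cliqueNum^(s+4) < G.cliqueNum^(s+5) :=
            Nat.pow_lt_pow_right (by omega) (by omega)
          omega
        obtain ⟨y, hyL, hyB⟩ : ∃ y, y ∈ L i ∧ y ∉ B := by
          by_contra hc
          push_neg at hc
          exact hnsub hc
        have hyadj : ∀ t : Fin n, G.Adj (f t) y := by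
          intro t
          by_contra hc
          exact hyB (Set.mem_iUnion.mpr ⟨t, hyL, hc⟩)
        refine ⟨fun t => if h : t.val < n then f ⟨t.val, h⟩ else y,
          fun t => if h : t.val < n then g ⟨t.val, h⟩ else i, ?_, ?_, ?_⟩
        · intro t
          by_cases h : t.val < n
          · simp only [dif_pos h]; exact hfmem _
          · simp only [dif_neg h]; exact hyL
        · intro t t' htt
          by_cases h : t.val < n <;> by_cases h' : t'.val < n
          · simp only [dif_pos h, dif_pos h'] at htt
            have := hginj htt
            have := congrArg Fin.val this
            simp only at this
            exact Fin.ext (by omega)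
          · simp only [dif_pos h, dif_neg h'] at htt
            exact absurd htt (hgne _)
          · simp only [dif_neg h, dif_pos h'] at htt
            exact absurd htt.symm (hgne _)
          · have := t.isLt
            have := t'.isLt
            exact Fin.ext (by omega)
        · intro t t' htt
          by_cases h : t.val < n <;> by_cases h' : t'.val < n
          · simp only [dif_pos h, dif_pos h']
            apply hfadj
            intro hc
            have := congrArg Fin.val hc
            simp only at this
            exact htt (Fin.ext this)
          · simp only [dif_pos h, dif_neg h']
            exact hyadj _
          · simp only [dif_neg h, dif_pos h']
            exact (hyadj _).symm
          · exfalso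
            have := t.isLt
            have := t'.isLt
            exact htt (Fin.ext (by omega))
    obtain ⟨f, g, hfmem, hginj, hfadj⟩ := claim (G.cliqueNum + 1) (le_refl _)
    have hfinj : Function.Injective f := by
      intro t t' htt
      by_contra hne
      exact G.ne_of_adj (hfadj t t' hne) htt
    have hcl : G.IsClique (Set.range f) := by
      rintro a ⟨t, rfl⟩ b ⟨t', rfl⟩ hne
      exact hfadj t t' (fun hc => hne (congrArg f hc))
    have hcard : (Set.range f).ncard = G.cliqueNum + 1 := by
      rw [← Set.image_univ, Set.ncard_image_of_injective _ hfinj, Set.ncard_univ,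
        Nat.card_eq_fintype_card, Fintype.card_fin]
    have := ncard_le_cliqueNum G hcl
    omega
  -- index set function
  set Iv : V → Set (Fin k) := fun v => {i | ∃ u ∈ L i, G.Adj v u} with hIvdef
  have hIvmem : ∀ v ∈ Ubig, v ∈ templatePart G s L0 L (Iv v) ∧
      (templatePart G s L0 L (Iv v)).ncard ≤ m := by
    intro v hv
    obtain ⟨I, hIle, hvI⟩ := hv
    have hIeq : I = Iv v := by
      ext i
      constructor
      · intro hi
        exact (hvI.2.2 i).mpr hi
      · intro hi
        exact (hvI.2.2 i).mp hi
    rw [← hIeq]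
    exact ⟨hvI, hIle⟩
  -- anticomplete selector
  have hsel : ∀ x : ↥Ubig, ∃ t : Fin k, ∀ w ∈ L t, ¬ G.Adj x.val w := by
    intro x
    obtain ⟨hnb, hpure, hiff⟩ := (hIvmem x.val x.2).1
    obtain ⟨⟨i₁, i₂, hne12, h1, h2⟩, -⟩ := hpure
    exact ⟨i₁, h1⟩
  choose tfun htfun using hsel
  set d : ℕ := m + G.cliqueNum^(s+1) with hd
  have hdpos : 0 < d := by
    have : 0 < G.cliqueNum^(s+1) := Nat.pow_pos (by omega)
    omega
  set Cb : ℕ := Fintype.card V with hCb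
  set enum : V → ℕ := fun v => ((Fintype.equivFin V) v).val with henum
  have henumlt : ∀ v, enum v ≤ Cb := fun v => le_of_lt (by
    rw [hCb]
    exact ((Fintype.equivFin V) v).isLt)
  have henuminj : Function.Injective enum := by
    intro a b h
    exact (Fintype.equivFin V).injective (Fin.ext h)
  set key : V → ℕ := fun v => (Iv v).ncard * (Cb+1) + enum v with hkey
  have hkeyinj : Function.Injective key := by
    intro a b h
    exact henuminj (pair_inj (henumlt a) (henumlt b) h).2
  -- vertices of Ubig are not in the template
  have hnotL : ∀ v ∈ Ubig, ∀ i : Fin k, v ∉ L i := by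
    intro v hv i hvi
    have hnb := ((hIvmem v hv).1).1
    exact hnb.1 (Or.inr (Set.mem_iUnion.mpr ⟨i, hvi⟩))
  -- groups
  set Ut : Fin k → Set V := fun t => {w | ∃ hx : w ∈ Ubig, tfun ⟨w, hx⟩ = t} with hUt
  -- the inner colorings
  have hinner : ∀ t : Fin k, (G.induce (Ut t)).Colorable d := by
    intro t
    apply greedy_colorable _ (fun x => key x.val) ?_ d ?_
    · intro a b h
      exact Subtype.ext (hkeyinj h)
    · -- back degree bound
      intro x
      obtain ⟨hxUb, hxt⟩ := x.2
      set v : V := x.val with hv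
      have hvpart := (hIvmem v hxUb).1
      have hvm := (hIvmem v hxUb).2
      have hvt_anti : ∀ w ∈ L t, ¬ G.Adj v w := by
        have h0 := htfun ⟨v, hxUb⟩
        rwa [hxt] at h0
      have ht_not : t ∉ Iv v := by
        rintro ⟨u, hu, hadj⟩
        exact hvt_anti u hu hadj
      set WW : Fin k → Set V := fun j => {w | G.Adj v w ∧ w ∉ L t ∧ w ∉ L j ∧
        (∀ u ∈ L t, ¬ G.Adj w u) ∧ (∀ u ∈ L j, ¬ G.Adj w u) ∧ j ∈ Iv v} with hWW
      have hWWcard : ∀ j : Fin k, (WW j).ncard ≤ G.cliqueNum^s - 1 := by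
        intro j
        by_contra hcon
        push_neg at hcon
        have hpow1 : 1 ≤ G.cliqueNum^s := Nat.one_le_pow _ _ (by omega)
        have hWne : (WW j).Nonempty := by
          rw [← Set.ncard_pos ((WW j).toFinite)]
          omega
        obtain ⟨w₀, hw₀⟩ := hWne
        have hjIv : j ∈ Iv v := hw₀.2.2.2.2.2
        have hjIv2 : j ∈ Iv v := hw₀.2.2.2.2.2
        obtain ⟨a, haL, hva⟩ := hjIv2
        have hchoose : ((G.cliqueNum - 1) + s).choose (G.cliqueNum - 1) ≤ (WW j).ncard := by
          have h1 : ((G.cliqueNum - 1) + s).choose (G.cliqueNum - 1)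
              = ((G.cliqueNum - 1) + s).choose s := by
            have := Nat.choose_symm (n := (G.cliqueNum - 1) + s) (k := s) (by omega)
            rw [← this]
            congr 1
            omega
          have h2 : ((G.cliqueNum - 1) + s).choose s ≤ G.cliqueNum^s := by
            have := choose_add_le_pow (G.cliqueNum - 1) s
            have he : G.cliqueNum - 1 + 1 = G.cliqueNum := by omega
            rwa [he] at this
          omega
        rcases ramsey_aux G ((G.cliqueNum - 1) + s) (G.cliqueNum - 1) s (WW j)
            (le_refl _) hchoose with hres | hres
        · -- stable s-set among the W's: build double star
          obtain ⟨Wst, hWsub, hWstable, hWcard⟩ := hres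
          -- stable s-set inside L t adjacent to a
          have hjt : j ≠ t := fun hc => ht_not (hc ▸ hjIv)
          have hbadcard := hcross j t hjt a haL
          have hA'card : (G.cliqueNum + s).choose G.cliqueNum
              ≤ ({u | u ∈ L t ∧ G.Adj a u}).ncard := by
            have hsub : L t ⊆ {u | u ∈ L t ∧ G.Adj a u} ∪ {u ∈ L t | ¬ G.Adj a u} := by
              intro u hu
              by_cases hadj : G.Adj a u
              · exact Or.inl ⟨hu, hadj⟩
              · exact Or.inr ⟨hu, hadj⟩
            have h1 := Set.ncard_le_ncard hsub (Set.toFinite _)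
            have h2 := Set.ncard_union_le {u | u ∈ L t ∧ G.Adj a u} {u ∈ L t | ¬ G.Adj a u}
            have h3 := (hsize t).1
            have h4 : (G.cliqueNum + s).choose G.cliqueNum ≤ G.cliqueNum^(s+4) :=
              num_main hω2
            have h5 : G.cliqueNum^(s+4) + G.cliqueNum^(s+3) ≤ G.cliqueNum^(s+5) := by
              have e4 : G.cliqueNum^(s+4) = G.cliqueNum^(s+3) * G.cliqueNum := by
                rw [← pow_succ]
              have e5 : G.cliqueNum^(s+5) = G.cliqueNum^(s+3) * (G.cliqueNum * G.cliqueNum) := by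
                rw [← mul_assoc, ← pow_succ, ← pow_succ]
              rw [e4, e5]
              have hq : G.cliqueNum + 1 ≤ G.cliqueNum * G.cliqueNum := by nlinarith
              calc G.cliqueNum^(s+3) * G.cliqueNum + G.cliqueNum^(s+3)
                  = G.cliqueNum^(s+3) * (G.cliqueNum + 1) := by ring
                _ ≤ G.cliqueNum^(s+3) * (G.cliqueNum * G.cliqueNum) :=
                    Nat.mul_le_mul_left _ hq
            omega
          rcases ramsey_aux G (G.cliqueNum + s) G.cliqueNum s {u | u ∈ L t ∧ G.Adj a u}
              (le_refl _) hA'card with hres2 | hres2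
          · obtain ⟨Sst, hSsub, hSstable, hScard⟩ := hres2
            refine no_double_star_config G hs hfree hva hWcard hScard hWstable hSstable
              ?_ ?_ ?_ ?_ ?_ ?_ ?_ ?_
            · intro w hw
              exact (hWsub hw).1
            · intro u hu
              exact (hSsub hu).2
            · intro u hu
              exact hvt_anti u (hSsub hu).1
            · intro w hw hadj
              exact (hWsub hw).2.2.2.2.1 a haL hadj.symm
            · intro w hw u hu
              exact (hWsub hw).2.2.2.1 u (hSsub hu).1
            · intro hvS
              exact hnotL v hxUb t (hSsub hvS).1
            · intro haW
              exact (hWsub haW).2.2.1 haL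
            · rw [Set.disjoint_left]
              intro w hw hwS
              exact (hWsub hw).2.1 (hSsub hwS).1
          · obtain ⟨K, hKsub, hKcl, hKcard⟩ := hres2
            have := ncard_le_cliqueNum G hKcl
            omega
        · -- clique of size ω among the W's
          obtain ⟨K, hKsub, hKcl, hKcard⟩ := hres
          have hvK : v ∉ K := by
            intro hvk
            exact G.irrefl (hKsub hvk).1
          have := clique_insert_bound hKcl (fun w hw => (hKsub hw).1) hvK
          omega
      -- now bound the back-neighbourhood
      set T : Set ↥(Ut t) := {y | (G.induce (Ut t)).Adj x y ∧
          (fun z : ↥(Ut t) => key z.val) y < (fun z : ↥(Ut t) => key z.val) x} with hT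
      have hTcard : T.ncard = (Subtype.val '' T).ncard :=
        (Set.ncard_image_of_injective _ Subtype.coe_injective).symm
      have hTsub : Subtype.val '' T ⊆
          (templatePart G s L0 L (Iv v) \ {v}) ∪ ⋃ j : Fin k, WW j := by
        rintro w ⟨y, ⟨hyadj, hykey⟩, rfl⟩
        have hwadj : G.Adj v y.val := hyadj
        obtain ⟨hwUb, hwt⟩ := y.2
        set w : V := y.val with hw
        have hwpart := (hIvmem w hwUb).1
        have hwm := (hIvmem w hwUb).2
        have hwt_anti : ∀ u ∈ L t, ¬ G.Adj w u := by
          have h0 := htfun ⟨w, hwUb⟩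
          rwa [hwt] at h0
        by_cases hIeq : Iv w = Iv v
        · left
          refine ⟨?_, ?_⟩
          · rw [← hIeq]
            exact hwpart
          · intro hc
            rw [Set.mem_singleton_iff] at hc
            exact G.ne_of_adj hwadj hc.symm
        · right
          have hrank : (Iv w).ncard ≤ (Iv v).ncard := by
            by_contra hcon
            push_neg at hcon
            have hmono := pair_mono (Cn := Cb) (a := (Iv v).ncard) (e := enum v)
              (a' := (Iv w).ncard) (e' := enum w) (henumlt v) hcon
            simp only [hkey, ← hv, ← hw] at hykey
            omega
          have hnotsub : ¬ (Iv v ⊆ Iv w) := by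
            intro hsub
            exact hIeq (Set.eq_of_subset_of_ncard_le hsub hrank (Set.toFinite _)).symm
          obtain ⟨j, hjv, hjw⟩ : ∃ j, j ∈ Iv v ∧ j ∉ Iv w := by
            by_contra hc
            push_neg at hc
            exact hnotsub (fun i hi => hc i hi)
          refine Set.mem_iUnion.mpr ⟨j, hwadj, ?_, ?_, hwt_anti, ?_, hjv⟩
          · exact hnotL w hwUb t
          · exact hnotL w hwUb j
          · intro u hu hadj
            exact hjw ⟨u, hu, hadj⟩
      have hdeg : T.ncard < d := by
        have h1 : (Subtype.val '' T).ncard ≤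
            (templatePart G s L0 L (Iv v) \ {v}).ncard + (⋃ j : Fin k, WW j).ncard := by
          calc (Subtype.val '' T).ncard
              ≤ ((templatePart G s L0 L (Iv v) \ {v}) ∪ ⋃ j : Fin k, WW j).ncard :=
                Set.ncard_le_ncard hTsub (Set.toFinite _)
            _ ≤ _ := Set.ncard_union_le _ _
        have h2 : (templatePart G s L0 L (Iv v) \ {v}).ncard ≤ m - 1 := by
          have hvin : v ∈ templatePart G s L0 L (Iv v) := hvpart
          have h3 := Set.ncard_diff_singleton_of_mem hvin
          have h4 : 0 < (templatePart G s L0 L (Iv v)).ncard :=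
            (Set.ncard_pos (Set.toFinite _)).mpr ⟨v, hvin⟩
          omega
        have h5 : (⋃ j : Fin k, WW j).ncard ≤ k * (G.cliqueNum^s - 1) := by
          calc (⋃ j : Fin k, WW j).ncard ≤ ∑ j : Fin k, (WW j).ncard :=
              ncard_iUnion_le_sum _
            _ ≤ ∑ _j : Fin k, (G.cliqueNum^s - 1) := by
                apply Finset.sum_le_sum
                intro j _
                exact hWWcard j
            _ = k * (G.cliqueNum^s - 1) := by
                rw [Finset.sum_const]
                simp [mul_comm]
        have h6 : k * (G.cliqueNum^s - 1) ≤ G.cliqueNum * (G.cliqueNum^s - 1) :=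
          Nat.mul_le_mul_right _ hkw
        have h7 : G.cliqueNum * (G.cliqueNum^s - 1) + G.cliqueNum = G.cliqueNum * G.cliqueNum^s := by
          have hpow1 : 1 ≤ G.cliqueNum^s := Nat.one_le_pow _ _ (by omega)
          calc G.cliqueNum * (G.cliqueNum^s - 1) + G.cliqueNum
              = G.cliqueNum * ((G.cliqueNum^s - 1) + 1) := by rw [Nat.mul_succ]
            _ = G.cliqueNum * G.cliqueNum^s := by
                congr 1
                omega
        have h8 : G.cliqueNum * G.cliqueNum^s = G.cliqueNum^(s+1) := by
          rw [← pow_succ']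
        have h9 : 1 ≤ m := by
          have h4 : 0 < (templatePart G s L0 L (Iv v)).ncard :=
            (Set.ncard_pos (Set.toFinite _)).mpr ⟨v, hvpart⟩
          omega
        rw [hd]
        omega
      exact hdeg
  -- assemble colorings
  set c0 : Fin d := ⟨0, hdpos⟩ with hc0
  have hCt : ∀ t : Fin k, (G.induce (Ut t)).Coloring (Fin d) := by
    intro t
    exact (hinner t).some
  set ct : Fin k → V → Fin d := fun t w => if h : w ∈ Ut t then (hCt t) ⟨w, h⟩ else c0
    with hct
  have hcoloring : (G.induce Ubig).Colorable (k * d) := by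
    have hco : (G.induce Ubig).Coloring (Fin k × Fin d) := by
      apply SimpleGraph.Coloring.mk (fun x => (tfun x, ct (tfun x) x.val))
      intro u w hadj heq
      have hadj' : G.Adj u.val w.val := hadj
      have h1 : tfun u = tfun w := congrArg Prod.fst heq
      have h2 : ct (tfun u) u.val = ct (tfun w) w.val := congrArg Prod.snd heq
      rw [← h1] at h2
      have hum : u.val ∈ Ut (tfun u) := ⟨u.2, rfl⟩
      have hwm : w.val ∈ Ut (tfun u) := by
        refine ⟨w.2, ?_⟩
        rw [h1]
      rw [hct] at h2
      simp only at h2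
      rw [dif_pos hum, dif_pos hwm] at h2
      have hadj2 : (G.induce (Ut (tfun u))).Adj ⟨u.val, hum⟩ ⟨w.val, hwm⟩ := hadj'
      exact (hCt (tfun u)).valid hadj2 h2
    have := hco.colorable
    simpa using this
  apply hcoloring.mono
  have h1 : k * d ≤ G.cliqueNum * d := Nat.mul_le_mul_right _ hkw
  have h2 : G.cliqueNum * d ≤ 2 * G.cliqueNum * d := by
    have hx : G.cliqueNum ≤ 2 * G.cliqueNum := by omega
    calc G.cliqueNum * d ≤ (2 * G.cliqueNum) * d := Nat.mul_le_mul_right _ hx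
      _ = 2 * G.cliqueNum * d := rfl
  have h3 : N = 2 * G.cliqueNum * d := by rw [hN, hd]
  omega
end

section
/- Let s ≥ 1 be an integer, let G be an H_s-free graph with clique number ω satisfying ω³ > ω + s/7, and let 𝓛 = (L_0, L_1, …, L_k) be an optimal s-template in G. Let m ≥ (s+1)ω^s, and let I, J ⊆ {1,…,k} be m-large with I ≠ J. Then either: J ⊆ I and every vertex in M_I has fewer than ω^s neighbours in M_J; or I ⊆ J and every vertex in M_J has fewer than ω^s neighbours in M_I; or I ∪ J = {1,…,k} and the sets M_I and M_J are s-crowded. -/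
open SimpleGraph Set

def rb : ℕ → ℕ → ℕ
  | _, 0 => 0
  | _, 1 => 0
  | 0, _ => 0
  | (a+1), (s+2) => rb a (s+2) + rb (a+1) (s+1) + 1

@[simp] lemma rb_zero_right (a : ℕ) : rb a 0 = 0 := by cases a <;> rw [rb]

@[simp] lemma rb_one_right (a : ℕ) : rb a 1 = 0 := by cases a <;> rw [rb]

lemma rb_one (s : ℕ) : rb 1 (s+1) ≤ s := by
  induction s with
  | zero => simp [rb]
  | succ n ih => rw [show n+1+1 = n+2 by ring, rb]; simpa [rb] using ih

lemma rb_lt_pow : ∀ n a s : ℕ, a + s ≤ n → 2 ≤ a → 1 ≤ s → rb a s < a ^ s := by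
  intro n
  induction n with
  | zero => intro a s h ha hs; omega
  | succ n ih =>
    intro a s hn ha hs
    match s, hs with
    | 1, _ => simpa [rb] using by positivity
    | (s+2), _ =>
      match a, ha with
      | 2, _ =>
        have h1 : rb 1 (s+2) ≤ s+1 := rb_one (s+1)
        have h2 : rb 2 (s+1) < 2 ^ (s+1) := ih 2 (s+1) (by omega) le_rfl (by omega)
        have h3 : s + 2 ≤ 2 ^ (s+1) := by
          have := Nat.lt_two_pow_self (n := s+1); omega
        calc rb 2 (s+2) = rb 1 (s+2) + rb 2 (s+1) + 1 := by rw [rb]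
          _ < 2 ^ (s+2) := by rw [pow_succ 2 (s+1)]; omega
      | (a+3), _ =>
        have h1 : rb (a+2) (s+2) < (a+2) ^ (s+2) := ih (a+2) (s+2) (by omega) (by omega) (by omega)
        have h2 : rb (a+3) (s+1) < (a+3) ^ (s+1) := ih (a+3) (s+1) (by omega) (by omega) (by omega)
        have key : (a+2) ^ (s+2) + (a+3) ^ (s+1) + 1 ≤ (a+3) ^ (s+2) := by
          have hlt : (a+2) ^ (s+1) + 1 ≤ (a+3) ^ (s+1) :=
            Nat.pow_lt_pow_left (by omega) (by omega)
          have e1 : (a+2) ^ (s+2) = (a+2) * (a+2) ^ (s+1) := by ring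
          have e2 : (a+3) ^ (s+2) = (a+3) * (a+3) ^ (s+1) := by ring
          rw [e1, e2]
          nlinarith [hlt]
        calc rb (a+3) (s+2) = rb (a+2) (s+2) + rb (a+3) (s+1) + 1 := by rw [rb]
          _ < (a+2) ^ (s+2) + (a+3) ^ (s+1) + 1 := by omega
          _ ≤ (a+3) ^ (s+2) := key

lemma exists_stable {V : Type*} (G : SimpleGraph V) :
    ∀ (n a s : ℕ) (A : Finset V), a + s ≤ n →
    (∀ B : Finset V, B ⊆ A → G.IsClique (B : Set V) → B.card ≤ a) →
    rb a s < A.card →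
    ∃ S : Finset V, S ⊆ A ∧ IsStableSet G ↑S ∧ S.card = s := by
  intro n
  induction n with
  | zero =>
    intro a s A hn hcl hcard
    have hs : s = 0 := by omega
    subst hs
    exact ⟨∅, by simp, fun x hx => by simp at hx, rfl⟩
  | succ n ih =>
    intro a s A hn hcl hcard
    classical
    match s with
    | 0 => exact ⟨∅, by simp, fun x hx => by simp at hx, rfl⟩
    | 1 =>
      obtain ⟨v, hv⟩ : A.Nonempty := Finset.card_pos.mp (by rw [rb_one_right] at hcard; omega)
      refine ⟨{v}, by simpa using hv, fun x hx y hy hxy => by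
        simp at hx hy; subst hx; subst hy; simp at hxy, rfl⟩
    | (s+2) =>
      match a with
      | 0 =>
        obtain ⟨v, hv⟩ : A.Nonempty := Finset.card_pos.mp
          (by have h0 : rb 0 (s+2) = 0 := by rw [rb] <;> omega
              omega)
        have := hcl {v} (by simpa using hv) (by simp [SimpleGraph.IsClique])
        simp at this
      | (a+1) =>
        obtain ⟨v, hv⟩ : A.Nonempty := Finset.card_pos.mp (by omega)
        set B := A.filter (fun u => G.Adj v u) with hB
        set C := A.filter (fun u => ¬ G.Adj v u ∧ u ≠ v) with hC
        have hvB : v ∉ B := by simp [hB]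
        have hvC : v ∉ C := by simp [hC]
        have hsub : A ⊆ insert v (B ∪ C) := by
          intro u hu
          by_cases h1 : u = v
          · simp [h1]
          · by_cases h2 : G.Adj v u
            · simp [hB, Finset.mem_insert, Finset.mem_union, Finset.mem_filter, hu, h2]
            · simp [hB, hC, Finset.mem_insert, Finset.mem_union, Finset.mem_filter, hu, h2, h1]
        have hcount : A.card ≤ B.card + C.card + 1 := by
          calc A.card ≤ (insert v (B ∪ C)).card := Finset.card_le_card hsub
            _ ≤ (B ∪ C).card + 1 := Finset.card_insert_le _ _
            _ ≤ B.card + C.card + 1 := by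
                have := Finset.card_union_le B C; omega
        rw [rb] at hcard
        by_cases hcase : rb a (s+2) < B.card
        · have hclB : ∀ Bc : Finset V, Bc ⊆ B → G.IsClique (Bc : Set V) → Bc.card ≤ a := by
            intro Bc hBc hBcc
            have hvBc : v ∉ Bc := fun h => hvB (hBc h)
            have : (insert v Bc).card ≤ a + 1 := by
              apply hcl _ _ (by
                rw [Finset.coe_insert]
                exact hBcc.insert (fun b hb _ => by
                  have := hBc hb; simp [hB] at this; exact this.2))
              intro u hu
              rcases Finset.mem_insert.mp hu with h | h
              · exact h ▸ hv
              · exact Finset.filter_subset _ _ (hBc h)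
            rw [Finset.card_insert_of_notMem hvBc] at this
            omega
          obtain ⟨S, hS1, hS2, hS3⟩ := ih a (s+2) B (by omega) hclB hcase
          exact ⟨S, hS1.trans (Finset.filter_subset _ _), hS2, hS3⟩
        · have hcC : rb (a+1) (s+1) < C.card := by omega
          have hclC : ∀ Bc : Finset V, Bc ⊆ C → G.IsClique (Bc : Set V) → Bc.card ≤ a + 1 :=
            fun Bc hBc hc => hcl Bc (hBc.trans (Finset.filter_subset _ _)) hc
          obtain ⟨S, hS1, hS2, hS3⟩ := ih (a+1) (s+1) C (by omega) hclC hcC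
          have hvS : v ∉ S := fun h => hvC (hS1 h)
          refine ⟨insert v S, ?_, ?_, ?_⟩
          · intro u hu
            rcases Finset.mem_insert.mp hu with h | h
            · exact h ▸ hv
            · exact Finset.filter_subset _ _ (hS1 h)
          · intro x hx y hy hxy
            rw [Finset.coe_insert, Set.mem_insert_iff] at hx hy
            rcases hx with hx | hx <;> rcases hy with hy | hy
            · exact absurd (hx.trans hy.symm) hxy
            · subst hx
              have := hS1 hy; simp [hC] at this
              exact this.2.1
            · subst hy
              have := hS1 hx; simp [hC] at this
              exact fun h => this.2.1 h.symm
            · exact hS2 x hx y hy hxy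
          · rw [Finset.card_insert_of_notMem hvS, hS3]

def dsFun {V : Type*} (s : ℕ) (x y : V) (ex ey : Fin s → V) (n : Fin (2*s+2)) : V :=
  if h0 : (n : ℕ) = 0 then x
  else if h1 : (n : ℕ) = 1 then y
  else if h2 : (n : ℕ) ≤ s + 1 then ex ⟨(n : ℕ) - 2, by omega⟩
  else ey ⟨(n : ℕ) - (s + 2), by have := n.isLt; omega⟩

lemma dsFun_eq0 {V : Type*} {s : ℕ} {x y : V} {ex ey : Fin s → V} {n : Fin (2*s+2)}
    (h : (n : ℕ) = 0) : dsFun s x y ex ey n = x := by simp [dsFun, h]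

lemma dsFun_eq1 {V : Type*} {s : ℕ} {x y : V} {ex ey : Fin s → V} {n : Fin (2*s+2)}
    (h : (n : ℕ) = 1) : dsFun s x y ex ey n = y := by simp [dsFun, h]

lemma dsFun_eqx {V : Type*} {s : ℕ} {x y : V} {ex ey : Fin s → V} {n : Fin (2*s+2)}
    (h2 : 2 ≤ (n : ℕ)) (h3 : (n : ℕ) ≤ s+1) (hp : (n : ℕ) - 2 < s) :
    dsFun s x y ex ey n = ex ⟨(n : ℕ) - 2, hp⟩ := by
  have e0 : ¬ ((n : ℕ) = 0) := by omega
  have e1 : ¬ ((n : ℕ) = 1) := by omega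
  simp [dsFun, e0, e1, h3]

lemma dsFun_eqy {V : Type*} {s : ℕ} {x y : V} {ex ey : Fin s → V} {n : Fin (2*s+2)}
    (h2 : s + 2 ≤ (n : ℕ)) (hp : (n : ℕ) - (s+2) < s) :
    dsFun s x y ex ey n = ey ⟨(n : ℕ) - (s+2), hp⟩ := by
  have e0 : ¬ ((n : ℕ) = 0) := by omega
  have e1 : ¬ ((n : ℕ) = 1) := by omega
  have e2 : ¬ ((n : ℕ) ≤ s + 1) := by omega
  simp [dsFun, e0, e1, e2]

lemma ds_adj_iff (s : ℕ) (m n : Fin (2*s+2)) :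
    (doubleStarGraph s).Adj m n ↔ ((m:ℕ) ≠ (n:ℕ) ∧
      (((m:ℕ)=0 ∧ (n:ℕ)=1) ∨ ((m:ℕ)=0 ∧ 2 ≤ (n:ℕ) ∧ (n:ℕ) ≤ s+1) ∨
       ((m:ℕ)=1 ∧ s+2 ≤ (n:ℕ)) ∨ ((n:ℕ)=0 ∧ (m:ℕ)=1) ∨
       ((n:ℕ)=0 ∧ 2 ≤ (m:ℕ) ∧ (m:ℕ) ≤ s+1) ∨ ((n:ℕ)=1 ∧ s+2 ≤ (m:ℕ)))) := by
  rw [doubleStarGraph, SimpleGraph.fromRel_adj]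
  constructor
  · rintro ⟨hne, h⟩
    refine ⟨fun hv => hne (Fin.ext hv), ?_⟩
    tauto
  · rintro ⟨hne, h⟩
    refine ⟨fun hv => hne (by rw [hv]), ?_⟩
    tauto

lemma no_doubleStar {V : Type*} (G : SimpleGraph V) (s : ℕ)
    (hfree : IsInducedFree G (doubleStarGraph s))
    (x y : V) (Sx Sy : Finset V)
    (hxy : G.Adj x y)
    (hxSx : x ∉ Sx) (hxSy : x ∉ Sy) (hySx : y ∉ Sx) (hySy : y ∉ Sy)
    (hdisj : Disjoint Sx Sy)
    (hcx : Sx.card = s) (hcy : Sy.card = s)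
    (hax : ∀ w ∈ Sx, G.Adj x w) (hay : ∀ w ∈ Sy, G.Adj y w)
    (hnx : ∀ w ∈ Sy, ¬ G.Adj x w) (hny : ∀ w ∈ Sx, ¬ G.Adj y w)
    (hstx : ∀ w ∈ Sx, ∀ z ∈ Sx, ¬ G.Adj w z)
    (hsty : ∀ w ∈ Sy, ∀ z ∈ Sy, ¬ G.Adj w z)
    (hcross : ∀ w ∈ Sx, ∀ z ∈ Sy, ¬ G.Adj w z) : False := by
  classical
  set ex : Fin s → V := fun p => ((Finset.equivFinOfCardEq hcx).symm p : V) with hex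
  set ey : Fin s → V := fun p => ((Finset.equivFinOfCardEq hcy).symm p : V) with hey
  have hexmem : ∀ p, ex p ∈ Sx := fun p => ((Finset.equivFinOfCardEq hcx).symm p).2
  have heymem : ∀ p, ey p ∈ Sy := fun p => ((Finset.equivFinOfCardEq hcy).symm p).2
  have hexinj : Function.Injective ex := fun p q h =>
    (Finset.equivFinOfCardEq hcx).symm.injective (Subtype.ext h)
  have heyinj : Function.Injective ey := fun p q h =>
    (Finset.equivFinOfCardEq hcy).symm.injective (Subtype.ext h)
  set f : Fin (2*s+2) → V := dsFun s x y ex ey with hfdef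
  have hreg : ∀ n : Fin (2*s+2), (n:ℕ) = 0 ∨ (n:ℕ) = 1 ∨
      (2 ≤ (n:ℕ) ∧ (n:ℕ) ≤ s+1) ∨ (s+2 ≤ (n:ℕ) ∧ (n:ℕ) < 2*s+2) :=
    fun n => by have := n.isLt; omega
  have hxy' : x ≠ y := hxy.ne
  -- value rewriting helper
  have hval : ∀ n : Fin (2*s+2),
      (((n:ℕ) = 0 ∧ f n = x) ∨ ((n:ℕ) = 1 ∧ f n = y) ∨
       (2 ≤ (n:ℕ) ∧ (n:ℕ) ≤ s+1 ∧ f n ∈ Sx) ∨ (s+2 ≤ (n:ℕ) ∧ f n ∈ Sy)) := by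
    intro n
    rcases hreg n with h | h | ⟨h1, h2⟩ | ⟨h1, h2⟩
    · exact Or.inl ⟨h, dsFun_eq0 h⟩
    · exact Or.inr (Or.inl ⟨h, dsFun_eq1 h⟩)
    · refine Or.inr (Or.inr (Or.inl ⟨h1, h2, ?_⟩))
      rw [hfdef, dsFun_eqx h1 h2 (by omega)]; exact hexmem _
    · refine Or.inr (Or.inr (Or.inr ⟨h1, ?_⟩))
      rw [hfdef, dsFun_eqy h1 (by omega)]; exact heymem _
  have hinj : Function.Injective f := by
    intro m n hmn
    rw [hfdef] at hmn
    rcases hreg m with hm | hm | ⟨hm1, hm2⟩ | ⟨hm1, hm2⟩ <;>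
      rcases hreg n with hn | hn | ⟨hn1, hn2⟩ | ⟨hn1, hn2⟩
    · exact Fin.ext (by omega)
    · rw [dsFun_eq0 hm, dsFun_eq1 hn] at hmn; exact absurd hmn hxy'
    · rw [dsFun_eq0 hm, dsFun_eqx hn1 hn2 (by omega)] at hmn
      exact absurd (by rw [hmn]; exact hexmem _) hxSx
    · rw [dsFun_eq0 hm, dsFun_eqy hn1 (by omega)] at hmn
      exact absurd (by rw [hmn]; exact heymem _) hxSy
    · rw [dsFun_eq1 hm, dsFun_eq0 hn] at hmn; exact absurd hmn.symm hxy'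
    · exact Fin.ext (by omega)
    · rw [dsFun_eq1 hm, dsFun_eqx hn1 hn2 (by omega)] at hmn
      exact absurd (by rw [hmn]; exact hexmem _) hySx
    · rw [dsFun_eq1 hm, dsFun_eqy hn1 (by omega)] at hmn
      exact absurd (by rw [hmn]; exact heymem _) hySy
    · rw [dsFun_eqx hm1 hm2 (by omega), dsFun_eq0 hn] at hmn
      exact absurd (by rw [← hmn]; exact hexmem _) hxSx
    · rw [dsFun_eqx hm1 hm2 (by omega), dsFun_eq1 hn] at hmn
      exact absurd (by rw [← hmn]; exact hexmem _) hySx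
    · rw [dsFun_eqx hm1 hm2 (by omega), dsFun_eqx hn1 hn2 (by omega)] at hmn
      have hv : (m:ℕ) - 2 = (n:ℕ) - 2 := congrArg Fin.val (hexinj hmn)
      exact Fin.ext (by omega)
    · rw [dsFun_eqx hm1 hm2 (by omega), dsFun_eqy hn1 (by omega)] at hmn
      exact absurd (by rw [hmn]; exact heymem _) (Finset.disjoint_right.mp hdisj.symm (hexmem _))
    · rw [dsFun_eqy hm1 (by omega), dsFun_eq0 hn] at hmn
      exact absurd (by rw [← hmn]; exact heymem _) hxSy
    · rw [dsFun_eqy hm1 (by omega), dsFun_eq1 hn] at hmn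
      exact absurd (by rw [← hmn]; exact heymem _) hySy
    · rw [dsFun_eqy hm1 (by omega), dsFun_eqx hn1 hn2 (by omega)] at hmn
      exact absurd (by rw [hmn]; exact hexmem _) (Finset.disjoint_left.mp hdisj.symm (heymem _))
    · rw [dsFun_eqy hm1 (by omega), dsFun_eqy hn1 (by omega)] at hmn
      have hv : (m:ℕ) - (s+2) = (n:ℕ) - (s+2) := congrArg Fin.val (heyinj hmn)
      exact Fin.ext (by omega)
  have hadj : ∀ m n : Fin (2*s+2), G.Adj (f m) (f n) ↔ (doubleStarGraph s).Adj m n := by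
    intro m n
    rw [ds_adj_iff, hfdef]
    rcases hreg m with hm | hm | ⟨hm1, hm2⟩ | ⟨hm1, hm2⟩ <;>
      rcases hreg n with hn | hn | ⟨hn1, hn2⟩ | ⟨hn1, hn2⟩
    · rw [dsFun_eq0 hm, dsFun_eq0 hn]; exact iff_of_false (G.irrefl) (by omega)
    · rw [dsFun_eq0 hm, dsFun_eq1 hn]; exact iff_of_true hxy (by omega)
    · rw [dsFun_eq0 hm, dsFun_eqx hn1 hn2 (by omega)]
      exact iff_of_true (hax _ (hexmem _)) (by omega)
    · rw [dsFun_eq0 hm, dsFun_eqy hn1 (by omega)]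
      exact iff_of_false (hnx _ (heymem _)) (by omega)
    · rw [dsFun_eq1 hm, dsFun_eq0 hn]; exact iff_of_true hxy.symm (by omega)
    · rw [dsFun_eq1 hm, dsFun_eq1 hn]; exact iff_of_false (G.irrefl) (by omega)
    · rw [dsFun_eq1 hm, dsFun_eqx hn1 hn2 (by omega)]
      exact iff_of_false (hny _ (hexmem _)) (by omega)
    · rw [dsFun_eq1 hm, dsFun_eqy hn1 (by omega)]
      exact iff_of_true (hay _ (heymem _)) (by omega)
    · rw [dsFun_eqx hm1 hm2 (by omega), dsFun_eq0 hn]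
      exact iff_of_true (hax _ (hexmem _)).symm (by omega)
    · rw [dsFun_eqx hm1 hm2 (by omega), dsFun_eq1 hn]
      exact iff_of_false (fun h => hny _ (hexmem _) h.symm) (by omega)
    · rw [dsFun_eqx hm1 hm2 (by omega), dsFun_eqx hn1 hn2 (by omega)]
      exact iff_of_false (hstx _ (hexmem _) _ (hexmem _)) (by omega)
    · rw [dsFun_eqx hm1 hm2 (by omega), dsFun_eqy hn1 (by omega)]
      exact iff_of_false (hcross _ (hexmem _) _ (heymem _)) (by omega)
    · rw [dsFun_eqy hm1 (by omega), dsFun_eq0 hn]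
      exact iff_of_false (fun h => hnx _ (heymem _) h.symm) (by omega)
    · rw [dsFun_eqy hm1 (by omega), dsFun_eq1 hn]
      exact iff_of_true (hay _ (heymem _)).symm (by omega)
    · rw [dsFun_eqy hm1 (by omega), dsFun_eqx hn1 hn2 (by omega)]
      exact iff_of_false (fun h => hcross _ (hexmem _) _ (heymem _) h.symm) (by omega)
    · rw [dsFun_eqy hm1 (by omega), dsFun_eqy hn1 (by omega)]
      exact iff_of_false (hsty _ (heymem _) _ (heymem _)) (by omega)
  have hiso : doubleStarGraph s ≃g G.induce (Set.range f) :=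
    { toEquiv := Equiv.ofInjective f hinj,
      map_rel_iff' := by
        intro m n
        exact hadj m n }
  exact hfree (Set.range f) ⟨hiso.symm⟩


set_option linter.unusedSectionVars false

section Helpers

variable {V : Type*} [Fintype V] {G : SimpleGraph V} {s : ℕ} {L0 : Set V} {k : ℕ}
  {L : Fin k → Set V}

lemma stable_anti {S : Set V} (h : IsStableSet G S) :
    ∀ w ∈ S, ∀ z ∈ S, ¬ G.Adj w z := by
  intro w hw z hz hadj
  by_cases e : w = z
  · subst e; exact G.irrefl hadj
  · exact h w hw z hz e hadj

lemma clique_bound (G : SimpleGraph V) : ∀ B : Finset V, G.IsClique (B : Set V) →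
    B.card ≤ G.cliqueNum := fun B hB => SimpleGraph.IsClique.card_le_cliqueNum (tc := hB)

lemma exists_stable_sub (G : SimpleGraph V) (hω2 : 2 ≤ G.cliqueNum) {s : ℕ} (hs : 1 ≤ s)
    (A : Finset V) (hA : G.cliqueNum ^ s ≤ A.card) :
    ∃ S : Finset V, S ⊆ A ∧ IsStableSet G ↑S ∧ S.card = s :=
  exists_stable G (G.cliqueNum + s) G.cliqueNum s A le_rfl
    (fun B _ hB => clique_bound G B hB)
    (lt_of_lt_of_le (rb_lt_pow (G.cliqueNum + s) G.cliqueNum s le_rfl hω2 hs) hA)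

lemma mem_verts_of_mem_L {i : Fin k} {w : V} (hw : w ∈ L i) : w ∈ templateVerts L0 L :=
  Or.inr (Set.mem_iUnion.mpr ⟨i, hw⟩)

lemma part_not_verts {I : Set (Fin k)} {v : V} (hv : v ∈ templatePart G s L0 L I) :
    v ∉ templateVerts L0 L := hv.1.1

lemma part_anti {I : Set (Fin k)} {v : V} (hv : v ∈ templatePart G s L0 L I)
    {i : Fin k} (hi : i ∉ I) : ∀ w ∈ L i, ¬ G.Adj v w := by
  intro w hw hadj
  exact hi ((hv.2.2 i).mp ⟨w, hw, hadj⟩)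

lemma part_few {I : Set (Fin k)} {v : V} (hv : v ∈ templatePart G s L0 L I)
    {i : Fin k} (hi : i ∈ I) :
    7 * ({w ∈ L i | ¬ G.Adj v w}).ncard ≤ G.cliqueNum ^ (s+2) := by
  rcases hv.2.1.2 i with h | h
  · obtain ⟨u, hu, ha⟩ := (hv.2.2 i).mpr hi
    exact absurd ha (h u hu)
  · exact h

lemma part_two_missing {I : Set (Fin k)} {v : V} (hv : v ∈ templatePart G s L0 L I) :
    ∃ i₁ i₂ : Fin k, i₁ ≠ i₂ ∧ i₁ ∉ I ∧ i₂ ∉ I := by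
  obtain ⟨i₁, i₂, hne, h1, h2⟩ := hv.2.1.1
  refine ⟨i₁, i₂, hne, fun h => ?_, fun h => ?_⟩
  · obtain ⟨u, hu, ha⟩ := (hv.2.2 i₁).mpr h
    exact h1 u hu ha
  · obtain ⟨u, hu, ha⟩ := (hv.2.2 i₂).mpr h
    exact h2 u hu ha

lemma parts_disjoint {I J : Set (Fin k)} (hIJ : I ≠ J) {v : V}
    (hvI : v ∈ templatePart G s L0 L I) (hvJ : v ∈ templatePart G s L0 L J) : False := by
  apply hIJ
  ext i
  exact ((hvI.2.2 i).symm.trans (hvJ.2.2 i))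

end Helpers

lemma cliqueNum_ge_two {V : Type*} [Fintype V] (G : SimpleGraph V) {s : ℕ} (hs : 1 ≤ s)
    (hω : 7 * G.cliqueNum ^ 3 > 7 * G.cliqueNum + s) : 2 ≤ G.cliqueNum := by
  by_contra h
  push_neg at h
  interval_cases hh : G.cliqueNum <;> simp [hh] at hω <;> omega

lemma few_nbrs {V : Type*} [Fintype V] (G : SimpleGraph V) (s : ℕ) (hs : 1 ≤ s)
    (hfree : IsInducedFree G (doubleStarGraph s))
    (hω : 7 * G.cliqueNum ^ 3 > 7 * G.cliqueNum + s)
    (L0 : Set V) (k : ℕ) (L : Fin k → Set V) (hT : IsTemplate G s L0 L)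
    (I J : Set (Fin k)) (i : Fin k) (hiI : i ∈ I) (hiJ : i ∉ J)
    (t : Fin k) (htI : t ∉ I) (htJ : t ∉ J)
    (v : V) (hv : v ∈ templatePart G s L0 L I) :
    ({u ∈ templatePart G s L0 L J | G.Adj v u}).ncard < G.cliqueNum ^ s := by
  classical
  by_contra hcon
  push_neg at hcon
  set ω := G.cliqueNum with hωdef
  have hω2 : 2 ≤ ω := cliqueNum_ge_two G hs hω
  have hIJne : I ≠ J := fun h => hiJ (h ▸ hiI)
  obtain ⟨hdisj0, hpair, hcl0, hcomp0, hsize, hnon⟩ := hT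
  -- stable set S among the neighbours of v in M_J
  set NS : Set V := {u ∈ templatePart G s L0 L J | G.Adj v u} with hNS
  have hNF : ω ^ s ≤ (Set.toFinite NS).toFinset.card := by
    rwa [← Set.ncard_eq_toFinset_card]
  obtain ⟨S, hSsub, hSst, hScard⟩ := exists_stable_sub G hω2 hs _ hNF
  have hSmem : ∀ w ∈ S, w ∈ templatePart G s L0 L J ∧ G.Adj v w := by
    intro w hw
    have := hSsub hw
    rw [Set.Finite.mem_toFinset] at this
    exact this
  -- the neighbour c of v in L i
  obtain ⟨c, hcLi, hvc⟩ := (hv.2.2 i).mpr hiI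
  -- stable set T among the neighbours of c in L t
  have hit : i ≠ t := fun h => htI (h ▸ hiI)
  set P : Finset V := (Set.toFinite (L t)).toFinset \
      (Set.toFinite {w ∈ L t | ¬ G.Adj c w}).toFinset with hP
  have hPcard : ω ^ s ≤ P.card := by
    have h1 : ω ^ (s+5) ≤ (Set.toFinite (L t)).toFinset.card := by
      rw [← Set.ncard_eq_toFinset_card]; exact (hsize t).1
    have h2 : (Set.toFinite {w ∈ L t | ¬ G.Adj c w}).toFinset.card ≤ ω ^ (s+3) := by
      rw [← Set.ncard_eq_toFinset_card]; exact hnon i t hit c hcLi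
    have h3 : (Set.toFinite (L t)).toFinset.card -
        (Set.toFinite {w ∈ L t | ¬ G.Adj c w}).toFinset.card ≤ P.card :=
      Finset.le_card_sdiff _ _
    have h4 : ω ^ s ≤ ω ^ (s+3) := Nat.pow_le_pow_right (by omega) (by omega)
    have h5 : ω ^ (s+3) ≤ ω ^ (s+4) := Nat.pow_le_pow_right (by omega) (by omega)
    have h6 : 2 * ω ^ (s+4) ≤ ω ^ (s+5) := by
      calc 2 * ω ^ (s+4) ≤ ω * ω ^ (s+4) := Nat.mul_le_mul_right _ hω2
        _ = ω ^ (s+5) := by ring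
    omega
  obtain ⟨T, hTsub, hTst, hTcard⟩ := exists_stable_sub G hω2 hs P hPcard
  have hTmem : ∀ w ∈ T, w ∈ L t ∧ G.Adj c w := by
    intro w hw
    have := hTsub hw
    rw [hP, Finset.mem_sdiff, Set.Finite.mem_toFinset, Set.Finite.mem_toFinset] at this
    obtain ⟨hw1, hw2⟩ := this
    refine ⟨hw1, ?_⟩
    by_contra hna
    exact hw2 ⟨hw1, hna⟩
  -- contradiction via the double star
  refine no_doubleStar G s hfree v c S T hvc ?_ ?_ ?_ ?_ ?_ hScard hTcard ?_ ?_ ?_ ?_ ?_ ?_ ?_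
  · -- v ∉ S
    intro hvS
    exact parts_disjoint hIJne hv (hSmem v hvS).1
  · -- v ∉ T
    intro hvT
    exact part_not_verts hv (mem_verts_of_mem_L (hTmem v hvT).1)
  · -- c ∉ S
    intro hcS
    exact part_not_verts (hSmem c hcS).1 (mem_verts_of_mem_L hcLi)
  · -- c ∉ T
    intro hcT
    exact Set.disjoint_left.mp (hpair hit) hcLi (hTmem c hcT).1
  · -- Disjoint S T
    rw [Finset.disjoint_left]
    intro w hwS hwT
    exact part_not_verts (hSmem w hwS).1 (mem_verts_of_mem_L (hTmem w hwT).1)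
  · exact fun w hw => (hSmem w hw).2
  · exact fun w hw => (hTmem w hw).2
  · -- ∀ w ∈ T, ¬ G.Adj v w
    exact fun w hw => part_anti hv htI w (hTmem w hw).1
  · -- ∀ w ∈ S, ¬ G.Adj c w
    intro w hw hadj
    exact part_anti (hSmem w hw).1 hiJ c hcLi hadj.symm
  · exact fun w hw z hz => stable_anti hSst w (by exact_mod_cast hw) z (by exact_mod_cast hz)
  · exact fun w hw z hz => stable_anti hTst w (by exact_mod_cast hw) z (by exact_mod_cast hz)
  · -- cross
    intro w hw z hz hadj
    exact part_anti (hSmem w hw).1 htJ z (hTmem z hz).1 hadj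

lemma crowded_of_cross {V : Type*} [Fintype V] (G : SimpleGraph V) (s : ℕ) (hs : 1 ≤ s)
    (hfree : IsInducedFree G (doubleStarGraph s))
    (hω : 7 * G.cliqueNum ^ 3 > 7 * G.cliqueNum + s)
    (L0 : Set V) (k : ℕ) (L : Fin k → Set V) (hT : IsTemplate G s L0 L)
    (I J : Set (Fin k)) (i : Fin k) (hiI : i ∈ I) (hiJ : i ∉ J)
    (j : Fin k) (hjJ : j ∈ J) (hjI : j ∉ I) :
    SCrowded G s (templatePart G s L0 L I) (templatePart G s L0 L J) := by
  classical
  rintro ⟨X, hXst, hXI, hXJ⟩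
  set ω := G.cliqueNum with hωdef
  have hω2 : 2 ≤ ω := cliqueNum_ge_two G hs hω
  have hIJne : I ≠ J := fun h => hiJ (h ▸ hiI)
  have hij : i ≠ j := fun h => hjI (h ▸ hiI)
  obtain ⟨hdisj0, hpair, hcl0, hcomp0, hsize, hnon⟩ := hT
  have hωpos : 0 < ω ^ (s+2) := Nat.pow_pos (by omega)
  set A : Finset V := (Set.toFinite (X ∩ templatePart G s L0 L I)).toFinset with hA
  set B : Finset V := (Set.toFinite (X ∩ templatePart G s L0 L J)).toFinset with hB
  have hAcard : A.card = s := by rw [hA, ← Set.ncard_eq_toFinset_card]; exact hXI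
  have hBcard : B.card = s := by rw [hB, ← Set.ncard_eq_toFinset_card]; exact hXJ
  have hAmem : ∀ x ∈ A, x ∈ X ∧ x ∈ templatePart G s L0 L I := by
    intro x hx; rwa [hA, Set.Finite.mem_toFinset] at hx
  have hBmem : ∀ x ∈ B, x ∈ X ∧ x ∈ templatePart G s L0 L J := by
    intro x hx; rwa [hB, Set.Finite.mem_toFinset] at hx
  -- non-neighbour finsets
  set NNI : V → Finset V := fun x => (Set.toFinite {w ∈ L i | ¬ G.Adj x w}).toFinset with hNNI
  set NNJ : V → Finset V := fun x => (Set.toFinite {w ∈ L j | ¬ G.Adj x w}).toFinset with hNNJ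
  have hNNIb : ∀ x ∈ A, 7 * (NNI x).card ≤ ω ^ (s+2) := by
    intro x hx
    rw [hNNI, ← Set.ncard_eq_toFinset_card]
    exact part_few (hAmem x hx).2 hiI
  have hNNJb : ∀ x ∈ B, 7 * (NNJ x).card ≤ ω ^ (s+2) := by
    intro x hx
    rw [hNNJ, ← Set.ncard_eq_toFinset_card]
    exact part_few (hBmem x hx).2 hjJ
  have hsmall : s * ω ^ (s+2) < 7 * ω ^ (s+5) := by
    have h1 : s < 7 * ω ^ 3 := by omega
    calc s * ω ^ (s+2) < (7 * ω ^ 3) * ω ^ (s+2) := (Nat.mul_lt_mul_right hωpos).mpr h1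
      _ = 7 * ω ^ (s+5) := by ring
  -- choose a ∈ L i adjacent to everything in A
  have hbiA : 7 * (A.biUnion NNI).card ≤ s * ω ^ (s+2) := by
    calc 7 * (A.biUnion NNI).card ≤ 7 * ∑ x ∈ A, (NNI x).card := by
          have := Finset.card_biUnion_le (s := A) (t := NNI)
          omega
      _ = ∑ x ∈ A, 7 * (NNI x).card := by rw [Finset.mul_sum]
      _ ≤ ∑ _x ∈ A, ω ^ (s+2) := Finset.sum_le_sum hNNIb
      _ = s * ω ^ (s+2) := by rw [Finset.sum_const, hAcard, smul_eq_mul]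
  have hLiF : ω ^ (s+5) ≤ (Set.toFinite (L i)).toFinset.card := by
    rw [← Set.ncard_eq_toFinset_card]; exact (hsize i).1
  have hQA : ((Set.toFinite (L i)).toFinset \ A.biUnion NNI).Nonempty := by
    rw [← Finset.card_pos]
    have h3 := Finset.le_card_sdiff (A.biUnion NNI) (Set.toFinite (L i)).toFinset
    omega
  obtain ⟨a, ha⟩ := hQA
  rw [Finset.mem_sdiff, Set.Finite.mem_toFinset] at ha
  obtain ⟨haLi, haB⟩ := ha
  have hadjA : ∀ x ∈ A, G.Adj x a := by
    intro x hx
    by_contra hna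
    exact haB (Finset.mem_biUnion.mpr ⟨x, hx, by
      rw [hNNI, Set.Finite.mem_toFinset]; exact ⟨haLi, hna⟩⟩)
  -- choose b ∈ L j adjacent to a and to everything in B
  have hbiB : 7 * (B.biUnion NNJ).card ≤ s * ω ^ (s+2) := by
    calc 7 * (B.biUnion NNJ).card ≤ 7 * ∑ x ∈ B, (NNJ x).card := by
          have := Finset.card_biUnion_le (s := B) (t := NNJ)
          omega
      _ = ∑ x ∈ B, 7 * (NNJ x).card := by rw [Finset.mul_sum]
      _ ≤ ∑ _x ∈ B, ω ^ (s+2) := Finset.sum_le_sum hNNJb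
      _ = s * ω ^ (s+2) := by rw [Finset.sum_const, hBcard, smul_eq_mul]
  have hNNa : (Set.toFinite {w ∈ L j | ¬ G.Adj a w}).toFinset.card ≤ ω ^ (s+3) := by
    rw [← Set.ncard_eq_toFinset_card]; exact hnon i j hij a haLi
  have hLjF : ω ^ (s+5) ≤ (Set.toFinite (L j)).toFinset.card := by
    rw [← Set.ncard_eq_toFinset_card]; exact (hsize j).1
  have hsmall2 : 7 * ω ^ (s+3) + s * ω ^ (s+2) < 7 * ω ^ (s+5) := by
    have h1 : (7 * ω + s) * ω ^ (s+2) < (7 * ω ^ 3) * ω ^ (s+2) :=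
      (Nat.mul_lt_mul_right hωpos).mpr hω
    calc 7 * ω ^ (s+3) + s * ω ^ (s+2) = (7 * ω + s) * ω ^ (s+2) := by ring
      _ < (7 * ω ^ 3) * ω ^ (s+2) := h1
      _ = 7 * ω ^ (s+5) := by ring
  have hQB : ((Set.toFinite (L j)).toFinset \
      ((Set.toFinite {w ∈ L j | ¬ G.Adj a w}).toFinset ∪ B.biUnion NNJ)).Nonempty := by
    rw [← Finset.card_pos]
    have h3 := Finset.le_card_sdiff
      ((Set.toFinite {w ∈ L j | ¬ G.Adj a w}).toFinset ∪ B.biUnion NNJ)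
      (Set.toFinite (L j)).toFinset
    have h4 := Finset.card_union_le (Set.toFinite {w ∈ L j | ¬ G.Adj a w}).toFinset
      (B.biUnion NNJ)
    omega
  obtain ⟨b, hb⟩ := hQB
  rw [Finset.mem_sdiff, Set.Finite.mem_toFinset, Finset.mem_union] at hb
  push_neg at hb
  obtain ⟨hbLj, hbNNa, hbB⟩ := hb
  have hab : G.Adj a b := by
    by_contra hna
    exact hbNNa (by rw [Set.Finite.mem_toFinset]; exact ⟨hbLj, hna⟩)
  have hadjB : ∀ x ∈ B, G.Adj x b := by
    intro x hx
    by_contra hna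
    exact hbB (Finset.mem_biUnion.mpr ⟨x, hx, by
      rw [hNNJ, Set.Finite.mem_toFinset]; exact ⟨hbLj, hna⟩⟩)
  -- contradiction via double star with hubs a, b and leaves A, B
  refine no_doubleStar G s hfree a b A B hab ?_ ?_ ?_ ?_ ?_ hAcard hBcard ?_ ?_ ?_ ?_ ?_ ?_ ?_
  · exact fun h => part_not_verts (hAmem a h).2 (mem_verts_of_mem_L haLi)
  · exact fun h => part_not_verts (hBmem a h).2 (mem_verts_of_mem_L haLi)
  · exact fun h => part_not_verts (hAmem b h).2 (mem_verts_of_mem_L hbLj)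
  · exact fun h => part_not_verts (hBmem b h).2 (mem_verts_of_mem_L hbLj)
  · rw [Finset.disjoint_left]
    intro w hwA hwB
    exact parts_disjoint hIJne (hAmem w hwA).2 (hBmem w hwB).2
  · exact fun w hw => (hadjA w hw).symm
  · exact fun w hw => (hadjB w hw).symm
  · -- ∀ w ∈ B, ¬ G.Adj a w
    intro w hw hadj
    exact part_anti (hBmem w hw).2 hiJ a haLi hadj.symm
  · intro w hw hadj
    exact part_anti (hAmem w hw).2 hjI b hbLj hadj.symm
  · exact fun w hw z hz => stable_anti hXst w (hAmem w hw).1 z (hAmem z hz).1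
  · exact fun w hw z hz => stable_anti hXst w (hBmem w hw).1 z (hBmem z hz).1
  · exact fun w hw z hz => stable_anti hXst w (hAmem w hw).1 z (hBmem z hz).1

/-- If `m ≥ (s+1) ω^s`, `ω³ > ω + s/7` and `I ≠ J` are `m`-large, then either `J ⊆ I` and
every vertex of `M_I` has fewer than `ω^s` neighbours in `M_J`; or `I ⊆ J` and every vertex
of `M_J` has fewer than `ω^s` neighbours in `M_I`; or `I ∪ J = {1,…,k}` and `M_I, M_J` are
`s`-crowded. -/
theorem template_nested {V : Type*} [Fintype V] (G : SimpleGraph V) (s : ℕ) (hs : 1 ≤ s)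
    (hfree : IsInducedFree G (doubleStarGraph s))
    (hω : 7 * G.cliqueNum ^ 3 > 7 * G.cliqueNum + s)
    (L0 : Set V) (k : ℕ) (L : Fin k → Set V) (hT : IsOptimalTemplate G s L0 L)
    (m : ℕ) (hm : (s+1) * G.cliqueNum ^ s ≤ m)
    (I J : Set (Fin k)) (hIJ : I ≠ J)
    (hI : m < (templatePart G s L0 L I).ncard) (hJ : m < (templatePart G s L0 L J).ncard) :
    (J ⊆ I ∧ ∀ v ∈ templatePart G s L0 L I,
        ({u ∈ templatePart G s L0 L J | G.Adj v u}).ncard < G.cliqueNum ^ s) ∨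
    (I ⊆ J ∧ ∀ v ∈ templatePart G s L0 L J,
        ({u ∈ templatePart G s L0 L I | G.Adj v u}).ncard < G.cliqueNum ^ s) ∨
    (I ∪ J = Set.univ ∧
      SCrowded G s (templatePart G s L0 L I) (templatePart G s L0 L J)) := by
  classical
  have hω2 : 2 ≤ G.cliqueNum := cliqueNum_ge_two G hs hω
  have hT' := hT.1
  by_cases hJI : J ⊆ I
  · -- J ⊆ I
    have hnIJ : ¬ I ⊆ J := fun h => hIJ (subset_antisymm h hJI)
    obtain ⟨i, hiI, hiJ⟩ := Set.not_subset.mp hnIJ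
    left
    refine ⟨hJI, fun v hv => ?_⟩
    obtain ⟨i₁, i₂, h12, h1I, h2I⟩ := part_two_missing hv
    exact few_nbrs G s hs hfree hω L0 k L hT' I J i hiI hiJ i₁ h1I (fun h => h1I (hJI h)) v hv
  · by_cases hICJ : I ⊆ J
    · -- I ⊆ J
      obtain ⟨j, hjJ, hjI⟩ := Set.not_subset.mp hJI
      right; left
      refine ⟨hICJ, fun v hv => ?_⟩
      obtain ⟨i₁, i₂, h12, h1J, h2J⟩ := part_two_missing hv
      exact few_nbrs G s hs hfree hω L0 k L hT' J I j hjJ hjI i₁ h1J (fun h => h1J (hICJ h)) v hv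
    · -- incomparable
      obtain ⟨i, hiI, hiJ⟩ := Set.not_subset.mp hICJ
      obtain ⟨j, hjJ, hjI⟩ := Set.not_subset.mp hJI
      have hcrowd := crowded_of_cross G s hs hfree hω L0 k L hT' I J i hiI hiJ j hjJ hjI
      refine Or.inr (Or.inr ⟨?_, hcrowd⟩)
      rw [Set.eq_univ_iff_forall]
      intro t
      by_contra ht
      rw [Set.mem_union] at ht
      push_neg at ht
      obtain ⟨htI, htJ⟩ := ht
      have hfew : ∀ v ∈ templatePart G s L0 L I,
          ({u ∈ templatePart G s L0 L J | G.Adj v u}).ncard < G.cliqueNum ^ s :=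
        fun v hv => few_nbrs G s hs hfree hω L0 k L hT' I J i hiI hiJ t htI htJ v hv
      have hps : 1 ≤ G.cliqueNum ^ s := Nat.one_le_pow _ _ (by omega)
      -- a stable subset of M_I of size s
      have hMIc : G.cliqueNum ^ s ≤ (Set.toFinite (templatePart G s L0 L I)).toFinset.card := by
        rw [← Set.ncard_eq_toFinset_card]
        have h1 : G.cliqueNum ^ s ≤ (s+1) * G.cliqueNum ^ s :=
          Nat.le_mul_of_pos_left _ (by omega)
        omega
      obtain ⟨SI, hSIsub, hSIst, hSIcard⟩ := exists_stable_sub G hω2 hs _ hMIc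
      have hSImem : ∀ x ∈ SI, x ∈ templatePart G s L0 L I := by
        intro x hx
        have := hSIsub hx
        rwa [Set.Finite.mem_toFinset] at this
      -- remove their neighbours from M_J
      set NB : V → Finset V :=
        fun x => (Set.toFinite {u ∈ templatePart G s L0 L J | G.Adj x u}).toFinset with hNB
      set C : Finset V := (Set.toFinite (templatePart G s L0 L J)).toFinset \ SI.biUnion NB
        with hC
      have hCcard : G.cliqueNum ^ s ≤ C.card := by
        have h1 : ∀ x ∈ SI, (NB x).card ≤ G.cliqueNum ^ s := by
          intro x hx
          rw [hNB, ← Set.ncard_eq_toFinset_card]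
          exact le_of_lt (hfew x (hSImem x hx))
        have h2 : (SI.biUnion NB).card ≤ s * G.cliqueNum ^ s := by
          calc (SI.biUnion NB).card ≤ ∑ x ∈ SI, (NB x).card := Finset.card_biUnion_le
            _ ≤ ∑ _x ∈ SI, G.cliqueNum ^ s := Finset.sum_le_sum h1
            _ = s * G.cliqueNum ^ s := by rw [Finset.sum_const, hSIcard, smul_eq_mul]
        have h3 : (s+1) * G.cliqueNum ^ s <
            (Set.toFinite (templatePart G s L0 L J)).toFinset.card := by
          rw [← Set.ncard_eq_toFinset_card]
          omega
        have h4 := Finset.le_card_sdiff (SI.biUnion NB)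
          (Set.toFinite (templatePart G s L0 L J)).toFinset
        have h5 : (s+1) * G.cliqueNum ^ s = s * G.cliqueNum ^ s + G.cliqueNum ^ s := by ring
        rw [hC]
        set p := G.cliqueNum ^ s
        set q := s * p
        omega
      obtain ⟨SJ, hSJsub, hSJst, hSJcard⟩ := exists_stable_sub G hω2 hs C hCcard
      have hSJmem : ∀ x ∈ SJ, x ∈ templatePart G s L0 L J ∧ ∀ y ∈ SI, ¬ G.Adj y x := by
        intro x hx
        have := hSJsub hx
        rw [hC, Finset.mem_sdiff, Set.Finite.mem_toFinset] at this
        obtain ⟨hx1, hx2⟩ := this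
        refine ⟨hx1, fun y hy hadj => ?_⟩
        exact hx2 (Finset.mem_biUnion.mpr ⟨y, hy, by
          rw [hNB, Set.Finite.mem_toFinset]; exact ⟨hx1, hadj⟩⟩)
      -- the stable set X contradicting crowdedness
      set X : Set V := ↑SI ∪ ↑SJ with hX
      have hstX : IsStableSet G X := by
        rintro p (hp | hp) q (hq | hq) hne hadj
        · exact hSIst p hp q hq hne hadj
        · exact (hSJmem q hq).2 p hp hadj
        · exact (hSJmem p hp).2 q hq hadj.symm
        · exact hSJst p hp q hq hne hadj
      have hXI : (X ∩ templatePart G s L0 L I).ncard = s := by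
        have : X ∩ templatePart G s L0 L I = ↑SI := by
          ext u
          constructor
          · rintro ⟨hu | hu, hu2⟩
            · exact hu
            · exact absurd ((hSJmem u hu).1) (fun h => parts_disjoint hIJ hu2 h)
          · intro hu
            exact ⟨Or.inl hu, hSImem u hu⟩
        rw [this, Set.ncard_coe_finset, hSIcard]
      have hXJ : (X ∩ templatePart G s L0 L J).ncard = s := by
        have : X ∩ templatePart G s L0 L J = ↑SJ := by
          ext u
          constructor
          · rintro ⟨hu | hu, hu2⟩
            · exact absurd hu2 (fun h => parts_disjoint hIJ (hSImem u hu) h)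
            · exact hu
          · intro hu
            exact ⟨Or.inr hu, (hSJmem u hu).1⟩
        rw [this, Set.ncard_coe_finset, hSJcard]
      exact hcrowd ⟨X, hstX, hXI, hXJ⟩
end
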